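/- arXiv:2305.09149 — 9 statements merged into one kernel-verified Lean document; each statement's English description precedes it below -/
import Mathlib

section
/- Let R = (R¹, R²) : U → ℝⁿ × ℝⁿ be a C² discretization map on ℝⁿ, let X : ℝⁿ → ℝⁿ be a C¹ vector field, and let γ : ℝ → ℝⁿ be a C² curve with γ(0) = x₀ and γ'(t) = X(γ(t)) for all t. Suppose ε > 0 and z, v : (−ε, ε) → ℝⁿ are C¹ maps such that for every h ∈ (−ε, ε): (z(h), v(h)) ∈ U, v(h) = h · X(z(h)), and R¹(z(h), v(h)) = x₀. Define Φ(h) := R²(z(h), v(h)). Then the one-step error Φ(h) − γ(h) is O(h²) as h → 0, i.e. the discretization defined by R⁻¹(x_k, x_{k+1}) = h X(τ(R⁻¹(x_k, x_{k+1}))) is a first-order integrator for X. -/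
open Topology Asymptotics

open Metric in
noncomputable section

lemma quad_bound {E F : Type*} [NormedAddCommGroup E] [NormedSpace ℝ E] [ProperSpace E]
    [NormedAddCommGroup F] [NormedSpace ℝ F]
    {f : E → F} {s : Set E} (hs : IsOpen s) {y₀ : E} (hy : y₀ ∈ s)
    (hf : ContDiffOn ℝ 2 f s) (h0 : f y₀ = 0) (h1 : fderiv ℝ f y₀ = 0) :
    f =O[𝓝 y₀] fun y => ‖y - y₀‖ ^ 2 := by
  obtain ⟨r, hr, hball⟩ := Metric.isOpen_iff.1 hs y₀ hy
  have hKs : closedBall y₀ (r/2) ⊆ s :=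
    (closedBall_subset_ball (by linarith)).trans hball
  have hf' : ContDiffOn ℝ 1 (fun y => fderiv ℝ f y) s :=
    hf.fderiv_of_isOpen hs (by norm_num)
  have hf'' : ContinuousOn (fun y => fderiv ℝ (fun y => fderiv ℝ f y) y) s :=
    hf'.continuousOn_fderiv_of_isOpen hs le_rfl
  obtain ⟨C, hC⟩ := (isCompact_closedBall y₀ (r/2)).exists_bound_of_continuousOn
    (f := fun y => fderiv ℝ (fun y => fderiv ℝ f y) y) (hf''.mono hKs)
  have hC0 : 0 ≤ C := le_trans (norm_nonneg _) (hC y₀ (mem_closedBall_self (by linarith)))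
  have step1 : ∀ y ∈ closedBall y₀ (r/2), ‖fderiv ℝ f y‖ ≤ C * ‖y - y₀‖ := by
    intro y hyK
    have := (convex_closedBall y₀ (r/2)).norm_image_sub_le_of_norm_fderiv_le
      (f := fun y => fderiv ℝ f y)
      (fun x hx => ((hf'.contDiffAt (hs.mem_nhds (hKs hx))).differentiableAt (by norm_num)))
      hC (mem_closedBall_self (by linarith)) hyK
    calc ‖fderiv ℝ f y‖ = ‖fderiv ℝ f y - fderiv ℝ f y₀‖ := by rw [h1]; simp
    _ ≤ C * ‖y - y₀‖ := this
  have step2 : ∀ y ∈ closedBall y₀ (r/2), ‖f y‖ ≤ C * ‖y - y₀‖ ^ 2 := by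
    intro y hyK
    have hsub : closedBall y₀ ‖y - y₀‖ ⊆ closedBall y₀ (r/2) :=
      closedBall_subset_closedBall (by simpa [dist_eq_norm] using hyK)
    have := (convex_closedBall y₀ ‖y - y₀‖).norm_image_sub_le_of_norm_fderiv_le
      (f := f)
      (fun x hx => ((hf.contDiffAt (hs.mem_nhds (hKs (hsub hx)))).differentiableAt
        (by norm_num)))
      (C := C * ‖y - y₀‖)
      (fun x hx => le_trans (step1 x (hsub hx))
        (by have := mem_closedBall_iff_norm.1 hx
            nlinarith [norm_nonneg (x - y₀), norm_nonneg (y - y₀)]))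
      (mem_closedBall_self (norm_nonneg _))
      (mem_closedBall_iff_norm.2 le_rfl)
    calc ‖f y‖ = ‖f y - f y₀‖ := by rw [h0]; simp
    _ ≤ C * ‖y - y₀‖ * ‖y - y₀‖ := this
    _ = C * ‖y - y₀‖ ^ 2 := by ring
  rw [Asymptotics.isBigO_iff]
  refine ⟨C, ?_⟩
  filter_upwards [Metric.closedBall_mem_nhds y₀ (by linarith : (0:ℝ) < r/2)] with y hyK
  simpa using step2 y hyK


/-- A discretization map on ℝⁿ. -/
def IsDiscretizationMap (n : ℕ) (U : Set ((Fin n → ℝ) × (Fin n → ℝ)))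
    (R : (Fin n → ℝ) × (Fin n → ℝ) → (Fin n → ℝ) × (Fin n → ℝ)) : Prop :=
  IsOpen U ∧
  (∀ x : Fin n → ℝ, (x, (0 : Fin n → ℝ)) ∈ U) ∧
  (∀ x : Fin n → ℝ, R (x, 0) = (x, x)) ∧
  (∀ x : Fin n → ℝ,
    fderiv ℝ (fun v : Fin n → ℝ => (R (x, v)).2 - (R (x, v)).1) 0
      = ContinuousLinearMap.id ℝ (Fin n → ℝ))

/-- the discretization `R⁻¹(x_k, x_{k+1}) = h X(τ(R⁻¹(x_k, x_{k+1})))`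
obtained from a C² discretization map `R` is a first-order integrator: the one-step
error `Φ(h) − γ(h)` is `O(h²)` as `h → 0`, where `γ` is the exact flow of `X` from `x₀`
and `Φ(h) = R²(z(h), v(h))` with `R¹(z(h), v(h)) = x₀` and `v(h) = h • X(z(h))`. -/
theorem discretization_is_first_order
    {n : ℕ} (U : Set ((Fin n → ℝ) × (Fin n → ℝ)))
    (R : (Fin n → ℝ) × (Fin n → ℝ) → (Fin n → ℝ) × (Fin n → ℝ))
    (hR : IsDiscretizationMap n U R)
    (hRC2 : ContDiffOn ℝ 2 R U)
    (X : (Fin n → ℝ) → (Fin n → ℝ)) (hX : ContDiff ℝ 1 X)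
    (γ : ℝ → (Fin n → ℝ)) (hγ : ContDiff ℝ 2 γ)
    (x₀ : Fin n → ℝ) (hγ0 : γ 0 = x₀)
    (hode : ∀ t : ℝ, deriv γ t = X (γ t))
    (ε : ℝ) (hε : 0 < ε)
    (z v : ℝ → (Fin n → ℝ))
    (hz : ContDiffOn ℝ 1 z (Set.Ioo (-ε) ε))
    (hv : ContDiffOn ℝ 1 v (Set.Ioo (-ε) ε))
    (hmem : ∀ h ∈ Set.Ioo (-ε) ε, (z h, v h) ∈ U)
    (hveq : ∀ h ∈ Set.Ioo (-ε) ε, v h = h • X (z h))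
    (hfix : ∀ h ∈ Set.Ioo (-ε) ε, (R (z h, v h)).1 = x₀) :
    (fun h : ℝ => (R (z h, v h)).2 - γ h) =O[𝓝 (0 : ℝ)] fun h : ℝ => h ^ 2 := by
  obtain ⟨hUopen, hU0, hRfix, hRderiv⟩ := hR
  have h0mem : (0:ℝ) ∈ Set.Ioo (-ε) ε := ⟨by linarith, hε⟩
  have hIoo : Set.Ioo (-ε) ε ∈ 𝓝 (0:ℝ) := Ioo_mem_nhds (by linarith) hε
  have hv0 : v 0 = 0 := by simpa using hveq 0 h0mem
  have hz0 : z 0 = x₀ := by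
    have h1 := hfix 0 h0mem
    rw [hv0, hRfix (z 0)] at h1
    exact h1
  -- the map ψ
  set ψ : (Fin n → ℝ) × (Fin n → ℝ) → (Fin n → ℝ) :=
    fun q => (R q).2 - (R q).1 - q.2 with hψdef
  have hψC2 : ContDiffOn ℝ 2 ψ U :=
    ((contDiff_snd.comp_contDiffOn hRC2).sub
      (contDiff_fst.comp_contDiffOn hRC2)).sub contDiff_snd.contDiffOn
  have hy₀U : ((x₀, (0 : Fin n → ℝ)) : _ × _) ∈ U := hU0 x₀
  have hψ0 : ψ (x₀, (0 : Fin n → ℝ)) = 0 := by simp [hψdef, hRfix x₀]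
  have hψdiff : DifferentiableAt ℝ ψ (x₀, (0 : Fin n → ℝ)) :=
    (hψC2.contDiffAt (hUopen.mem_nhds hy₀U)).differentiableAt (by norm_num)
  set L := fderiv ℝ ψ (x₀, (0 : Fin n → ℝ)) with hLdef
  have hL : HasFDerivAt ψ L (x₀, (0 : Fin n → ℝ)) := hψdiff.hasFDerivAt
  -- partial in x vanishes
  have ha : HasFDerivAt (fun x : Fin n → ℝ => ψ (x, (0 : Fin n → ℝ)))
      (L.comp ((ContinuousLinearMap.id ℝ (Fin n → ℝ)).prod 0)) x₀ :=
    HasFDerivAt.comp (g := ψ) (f := fun x : Fin n → ℝ => (x, (0 : Fin n → ℝ))) x₀ hL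
      ((hasFDerivAt_id (𝕜 := ℝ) x₀).prodMk (hasFDerivAt_const (𝕜 := ℝ) (0 : Fin n → ℝ) x₀))
  have hfun1 : (fun x : Fin n → ℝ => ψ (x, (0 : Fin n → ℝ))) = fun _ => (0 : Fin n → ℝ) := by
    funext x; simp [hψdef, hRfix x]
  rw [hfun1] at ha
  have hL1 : L.comp ((ContinuousLinearMap.id ℝ (Fin n → ℝ)).prod 0) = 0 :=
    ha.unique (hasFDerivAt_const (0 : Fin n → ℝ) x₀)
  -- partial in v vanishes
  have hb : HasFDerivAt (fun w : Fin n → ℝ => ψ (x₀, w))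
      (L.comp ((0 : (Fin n → ℝ) →L[ℝ] (Fin n → ℝ)).prod (ContinuousLinearMap.id ℝ (Fin n → ℝ)))) 0 :=
    hL.comp 0 ((hasFDerivAt_const x₀ (0 : Fin n → ℝ)).prodMk (hasFDerivAt_id 0))
  have hG : HasFDerivAt (fun w : Fin n → ℝ => (R (x₀, w)).2 - (R (x₀, w)).1)
      (L.comp ((0 : (Fin n → ℝ) →L[ℝ] (Fin n → ℝ)).prod (ContinuousLinearMap.id ℝ (Fin n → ℝ)))
        + ContinuousLinearMap.id ℝ (Fin n → ℝ)) 0 := by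
    have : HasFDerivAt ((fun w : Fin n → ℝ => ψ (x₀, w)) + id)
        (L.comp ((0 : (Fin n → ℝ) →L[ℝ] (Fin n → ℝ)).prod (ContinuousLinearMap.id ℝ (Fin n → ℝ)))
          + ContinuousLinearMap.id ℝ (Fin n → ℝ)) 0 :=
      hb.add (hasFDerivAt_id (0 : Fin n → ℝ))
    convert this using 1
    funext w
    simp [hψdef]
  have hL2 : L.comp ((0 : (Fin n → ℝ) →L[ℝ] (Fin n → ℝ)).prod (ContinuousLinearMap.id ℝ (Fin n → ℝ)))
      = 0 := by
    have h2 := hG.fderiv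
    rw [hRderiv x₀] at h2
    have := h2
    -- L₂ + id = id
    have h3 : L.comp ((0 : (Fin n → ℝ) →L[ℝ] (Fin n → ℝ)).prod (ContinuousLinearMap.id ℝ (Fin n → ℝ)))
        + ContinuousLinearMap.id ℝ (Fin n → ℝ) = ContinuousLinearMap.id ℝ (Fin n → ℝ) := this.symm
    have h4 := congrArg (fun T => T - ContinuousLinearMap.id ℝ (Fin n → ℝ)) h3
    simpa using h4
  have hL0 : L = 0 := by
    apply ContinuousLinearMap.ext
    intro q
    have hq : q = ((q.1, (0 : Fin n → ℝ)) : _ × _) + ((0 : Fin n → ℝ), q.2) := by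
      simp [Prod.ext_iff]
    rw [hq, map_add]
    have e1 : L ((q.1, (0 : Fin n → ℝ)) : _ × _)
        = (L.comp ((ContinuousLinearMap.id ℝ (Fin n → ℝ)).prod 0)) q.1 := rfl
    have e2 : L (((0 : Fin n → ℝ), q.2) : _ × _)
        = (L.comp ((0 : (Fin n → ℝ) →L[ℝ] (Fin n → ℝ)).prod (ContinuousLinearMap.id ℝ (Fin n → ℝ)))) q.2 := rfl
    rw [e1, e2, hL1, hL2]
    simp
  -- quadratic bound for ψ
  have hψO : ψ =O[𝓝 ((x₀, (0 : Fin n → ℝ)) : _ × _)]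
      fun q => ‖q - ((x₀, (0 : Fin n → ℝ)) : _ × _)‖ ^ 2 :=
    quad_bound hUopen hy₀U hψC2 hψ0 (hLdef ▸ hL0)
  -- the path p
  set p : ℝ → (Fin n → ℝ) × (Fin n → ℝ) := fun h => (z h, v h) with hpdef
  have hzd : DifferentiableAt ℝ z 0 := (hz.contDiffAt hIoo).differentiableAt (by norm_num)
  have hvd : DifferentiableAt ℝ v 0 := (hv.contDiffAt hIoo).differentiableAt (by norm_num)
  have hpd : DifferentiableAt ℝ p 0 := hzd.prodMk hvd
  have hp0 : p 0 = ((x₀, (0 : Fin n → ℝ)) : _ × _) := by simp [hpdef, hz0, hv0]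
  have hpO : (fun h : ℝ => p h - ((x₀, (0 : Fin n → ℝ)) : _ × _)) =O[𝓝 (0:ℝ)] fun h => h := by
    have := hpd.isBigO_sub
    rw [hp0] at this
    refine this.trans ?_
    apply Asymptotics.isBigO_of_le
    intro h; simp
  have hpcont : Filter.Tendsto p (𝓝 (0:ℝ)) (𝓝 ((x₀, (0 : Fin n → ℝ)) : _ × _)) := by
    have := hpd.continuousAt.tendsto
    rwa [hp0] at this
  -- term A
  have TermA : (fun h : ℝ => ψ (p h)) =O[𝓝 (0:ℝ)] fun h => h ^ 2 := by
    refine (hψO.comp_tendsto hpcont).trans ?_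
    exact hpO.norm_left.pow 2
  -- term B
  have TermB : (fun h : ℝ => h • (X (z h) - X x₀)) =O[𝓝 (0:ℝ)] fun h => h ^ 2 := by
    have hXz : DifferentiableAt ℝ (fun h : ℝ => X (z h)) 0 :=
      ((hX.differentiable (by norm_num)) (z 0)).comp 0 hzd
    have hB1 : (fun h : ℝ => X (z h) - X x₀) =O[𝓝 (0:ℝ)] fun h => h := by
      have := hXz.isBigO_sub
      rw [hz0] at this
      refine this.trans ?_
      apply Asymptotics.isBigO_of_le
      intro h; simp
    have := (Asymptotics.isBigO_refl (fun h : ℝ => h) (𝓝 (0:ℝ))).smul hB1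
    refine this.trans ?_
    apply Asymptotics.isBigO_of_le
    intro h
    simp [smul_eq_mul, sq, abs_mul]
  -- term C
  have TermC : (fun h : ℝ => γ h - x₀ - h • X x₀) =O[𝓝 (0:ℝ)] fun h => h ^ 2 := by
    set f : ℝ → (Fin n → ℝ) := fun h => γ h - x₀ - h • X x₀ with hfdef
    have hfC2 : ContDiffOn ℝ 2 f Set.univ :=
      ((hγ.sub contDiff_const).sub (contDiff_id.smul contDiff_const)).contDiffOn
    have hf0 : f 0 = 0 := by simp [hfdef, hγ0]
    have hd1 : HasDerivAt γ (deriv γ 0) 0 :=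
      ((hγ.differentiable (by norm_num)) 0).hasDerivAt
    have hd2 : HasDerivAt (fun h : ℝ => h • X x₀) ((1:ℝ) • X x₀) 0 :=
      (hasDerivAt_id 0).smul_const (X x₀)
    have hd : HasDerivAt f (deriv γ 0 - (1:ℝ) • X x₀) 0 := (hd1.sub_const x₀).sub hd2
    have hzero : deriv γ 0 - (1:ℝ) • X x₀ = 0 := by rw [hode 0, hγ0]; simp
    rw [hzero] at hd
    have hfderiv : fderiv ℝ f 0 = 0 := by
      have := hd.hasFDerivAt.fderiv
      rw [this]; ext t; simp
    have := quad_bound isOpen_univ (Set.mem_univ (0:ℝ)) hfC2 hf0 hfderiv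
    refine this.trans ?_
    apply Asymptotics.isBigO_of_le
    intro h
    simp [Real.norm_eq_abs, sq_abs, abs_pow]
  -- assemble
  have hsum := (TermA.add TermB).sub TermC
  refine hsum.congr' ?_ (Filter.EventuallyEq.rfl)
  filter_upwards [hIoo] with h hh
  have e1 : ψ (p h) = (R (z h, v h)).2 - x₀ - h • X (z h) := by
    simp only [hψdef, hpdef]
    rw [hfix h hh, hveq h hh]
  rw [e1, smul_sub]
  abel
end
end

section
/- Let R = (R¹, R²) : U → ℝⁿ × ℝⁿ be a C³ discretization map on ℝⁿ that is symmetric, i.e. R = R* where R*(x, v) := (R²(x, −v), R¹(x, −v)). Let X : ℝⁿ → ℝⁿ be a C² vector field and let γ : ℝ → ℝⁿ be a C³ curve with γ(0) = x₀ and γ'(t) = X(γ(t)) for all t. Suppose ε > 0 and z, v : (−ε, ε) → ℝⁿ are C² maps such that for every h ∈ (−ε, ε): (z(h), v(h)) ∈ U, v(h) = h · X(z(h)), and R¹(z(h), v(h)) = x₀. Define Φ(h) := R²(z(h), v(h)). Then the one-step error Φ(h) − γ(h) is O(h³) as h → 0, i.e. a symmetric discretization map yields a second-order integrator for X. -/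
open Topology Asymptotics

section Helpers

open Filter ContinuousLinearMap

variable {E F : Type*} [NormedAddCommGroup E] [NormedSpace ℝ E]
  [NormedAddCommGroup F] [NormedSpace ℝ F]

/-- Mean-value step: if `fderiv f = O(‖y-p‖^k)` near `p` then `f - f p = O(‖y-p‖^(k+1))`. -/
lemma isBigO_step {f : E → F} {s : Set E} (hs : IsOpen s) {p : E} (hp : p ∈ s)
    (hf : DifferentiableOn ℝ f s) {k : ℕ}
    (hd : (fun y => fderiv ℝ f y) =O[𝓝 p] (fun y => ‖y - p‖ ^ k)) :
    (fun y => f y - f p) =O[𝓝 p] (fun y => ‖y - p‖ ^ (k + 1)) := by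
  rcases hd.exists_nonneg with ⟨C, hC0, hC⟩
  rw [isBigOWith_iff] at hC
  rcases Metric.mem_nhds_iff.mp (Filter.inter_mem (hs.mem_nhds hp) hC) with ⟨r, hr, hball⟩
  rw [isBigO_iff]
  refine ⟨C, Filter.eventually_of_mem (Metric.ball_mem_nhds p hr) fun x hx => ?_⟩
  have hsub : Metric.closedBall p ‖x - p‖ ⊆ Metric.ball p r := by
    intro y hy
    rw [Metric.mem_closedBall, dist_eq_norm] at hy
    rw [Metric.mem_ball, dist_eq_norm]
    calc ‖y - p‖ ≤ ‖x - p‖ := hy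
      _ < r := by rw [Metric.mem_ball, dist_eq_norm] at hx; exact hx
  have hder : ∀ y ∈ Metric.closedBall p ‖x - p‖,
      HasFDerivWithinAt f (fderiv ℝ f y) (Metric.closedBall p ‖x - p‖) y := by
    intro y hy
    exact ((hf.differentiableAt (hs.mem_nhds ((hball (hsub hy)).1))).hasFDerivAt).hasFDerivWithinAt
  have hbound : ∀ y ∈ Metric.closedBall p ‖x - p‖, ‖fderiv ℝ f y‖ ≤ C * ‖x - p‖ ^ k := by
    intro y hy
    have h1 := (hball (hsub hy)).2
    have h2 : ‖y - p‖ ^ k ≤ ‖x - p‖ ^ k := by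
      apply pow_le_pow_left₀ (norm_nonneg _)
      rw [Metric.mem_closedBall, dist_eq_norm] at hy
      exact hy
    calc ‖fderiv ℝ f y‖ ≤ C * ‖‖y - p‖ ^ k‖ := h1
      _ = C * ‖y - p‖ ^ k := by rw [norm_pow, norm_norm]
      _ ≤ C * ‖x - p‖ ^ k := by exact mul_le_mul_of_nonneg_left h2 hC0
  have := (convex_closedBall p ‖x - p‖).norm_image_sub_le_of_norm_hasFDerivWithin_le
    hder hbound (Metric.mem_closedBall_self (norm_nonneg _))
    (by rw [Metric.mem_closedBall, dist_eq_norm])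
  calc ‖f x - f p‖ ≤ C * ‖x - p‖ ^ k * ‖x - p‖ := this
    _ = C * ‖x - p‖ ^ (k + 1) := by ring
    _ ≤ C * ‖‖x - p‖ ^ (k + 1)‖ := by rw [norm_pow, norm_norm]

/-- C² with vanishing first derivative at `p` gives a quadratic bound. -/
lemma isBigO_sq_of_jet_zero {f : E → F} {s : Set E} (hs : IsOpen s) {p : E} (hp : p ∈ s)
    (hf : ContDiffOn ℝ 2 f s) (h1 : fderiv ℝ f p = 0) :
    (fun y => f y - f p) =O[𝓝 p] (fun y => ‖y - p‖ ^ 2) := by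
  have hg : ContDiffOn ℝ 1 (fderiv ℝ f) s := hf.fderiv_of_isOpen hs (by norm_num)
  have hgd : DifferentiableAt ℝ (fderiv ℝ f) p :=
    (hg.contDiffAt (hs.mem_nhds hp)).differentiableAt one_ne_zero
  have hd : (fun y => fderiv ℝ f y) =O[𝓝 p] (fun y => ‖y - p‖ ^ (1 : ℕ)) := by
    have := hgd.isBigO_sub
    rw [h1] at this
    simp only [sub_zero] at this
    refine this.trans ?_
    simp only [pow_one]
    exact (isBigO_refl _ _).norm_right
  have := isBigO_step hs hp (hf.differentiableOn (by norm_num)) hd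
  exact this

/-- C³ with vanishing first and second derivative at `p` gives a cubic bound. -/
lemma isBigO_cube_of_jet_zero {f : E → F} {s : Set E} (hs : IsOpen s) {p : E} (hp : p ∈ s)
    (hf : ContDiffOn ℝ 3 f s) (h1 : fderiv ℝ f p = 0)
    (h2 : fderiv ℝ (fderiv ℝ f) p = 0) :
    (fun y => f y - f p) =O[𝓝 p] (fun y => ‖y - p‖ ^ 3) := by
  have hg : ContDiffOn ℝ 2 (fderiv ℝ f) s := hf.fderiv_of_isOpen hs (by norm_num)
  have hd2 := isBigO_sq_of_jet_zero hs hp hg h2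
  rw [h1] at hd2
  simp only [sub_zero] at hd2
  have := isBigO_step hs hp (hf.differentiableOn (by norm_num)) hd2
  exact this

/-- An eventually-even C¹ map has vanishing derivative at 0. -/
lemma fderiv_zero_of_even {k : E → F} (hk : DifferentiableAt ℝ k 0)
    (heven : ∀ᶠ v in 𝓝 (0 : E), k (-v) = k v) :
    fderiv ℝ k 0 = 0 := by
  have hneg : HasFDerivAt (fun u : E => -u) (-(ContinuousLinearMap.id ℝ E)) 0 :=
    (hasFDerivAt_id (0 : E)).neg
  have hk0 : DifferentiableAt ℝ k (-(0 : E)) := by simpa using hk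
  have hcomp : fderiv ℝ (fun u => k (-u)) 0 =
      (fderiv ℝ k 0).comp (-(ContinuousLinearMap.id ℝ E)) := by
    have := (hk0.hasFDerivAt.comp (0 : E) hneg).fderiv
    simpa [Function.comp_def] using this
  have heq : fderiv ℝ (fun u => k (-u)) 0 = fderiv ℝ k 0 :=
    Filter.EventuallyEq.fderiv_eq heven
  have hmain : (fderiv ℝ k 0).comp (-(ContinuousLinearMap.id ℝ E)) = fderiv ℝ k 0 := by
    rw [← hcomp, heq]
  ext w
  have h2 := congrFun (congrArg DFunLike.coe hmain) w
  simp only [ContinuousLinearMap.coe_comp', Function.comp_apply,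
    ContinuousLinearMap.neg_apply, ContinuousLinearMap.coe_id', id_eq, map_neg] at h2
  have h3 : fderiv ℝ k 0 w + fderiv ℝ k 0 w = 0 := by
    nth_rewrite 1 [← h2]; exact neg_add_cancel _
  rw [← two_smul ℝ] at h3
  have h4 := (smul_eq_zero.mp h3).resolve_left (by norm_num)
  simpa using h4

/-- An eventually-odd map has even derivative near 0. -/
lemma fderiv_even_of_odd {s : E → F} (hs : ∀ᶠ v in 𝓝 (0 : E), DifferentiableAt ℝ s v)
    (hodd : ∀ᶠ v in 𝓝 (0 : E), s (-v) = -s v) :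
    ∀ᶠ v in 𝓝 (0 : E), fderiv ℝ s (-v) = fderiv ℝ s v := by
  obtain ⟨t, htsub, htopen, ht0⟩ := mem_nhds_iff.mp (hodd.and hs)
  have htsym : ∀ u ∈ t ∩ -t, s (-u) = -s u ∧ DifferentiableAt ℝ s u := fun u hu => htsub hu.1
  have h0 : (0 : E) ∈ t ∩ -t := ⟨ht0, by simpa using ht0⟩
  have hopen : IsOpen (t ∩ -t) := htopen.inter htopen.neg
  filter_upwards [hopen.mem_nhds h0] with v hv
  have hvneg : -v ∈ t ∩ -t := ⟨by simpa using hv.2, by simpa using hv.1⟩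
  -- s =ᶠ[𝓝 v] fun u => -s (-u)
  have heqv : (fun u => -s (-u)) =ᶠ[𝓝 v] s := by
    filter_upwards [hopen.mem_nhds hv] with u hu
    rw [(htsub hu.1).1]; simp
  have hneg : HasFDerivAt (fun u : E => -u) (-(ContinuousLinearMap.id ℝ E)) v :=
    (hasFDerivAt_id v).neg
  have hdneg : DifferentiableAt ℝ s (-v) := (htsub hvneg.1).2
  have hcomp : fderiv ℝ (fun u => -s (-u)) v =
      -((fderiv ℝ s (-v)).comp (-(ContinuousLinearMap.id ℝ E))) := by
    have h1 : HasFDerivAt (fun u : E => s (-u))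
        ((fderiv ℝ s (-v)).comp (-(ContinuousLinearMap.id ℝ E))) v :=
      HasFDerivAt.comp (𝕜 := ℝ) v hdneg.hasFDerivAt hneg
    have h2 : HasFDerivAt (fun u : E => -s (-u))
        (-((fderiv ℝ s (-v)).comp (-(ContinuousLinearMap.id ℝ E)))) v := h1.neg
    exact h2.fderiv
  have : fderiv ℝ (fun u => -s (-u)) v = fderiv ℝ s v := heqv.fderiv_eq
  rw [hcomp] at this
  rw [← this]
  ext w
  simp

/-- An eventually-odd C² map has vanishing second derivative at 0. -/
lemma second_fderiv_zero_of_odd {s : E → F}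
    (hs : ∀ᶠ v in 𝓝 (0 : E), DifferentiableAt ℝ s v)
    (hk : DifferentiableAt ℝ (fderiv ℝ s) 0)
    (hodd : ∀ᶠ v in 𝓝 (0 : E), s (-v) = -s v) :
    fderiv ℝ (fderiv ℝ s) 0 = 0 :=
  fderiv_zero_of_even hk (fderiv_even_of_odd hs hodd)


lemma fderiv_zero_of_deriv_zero {f : ℝ → F} {t : ℝ} (h : deriv f t = 0) :
    fderiv ℝ f t = 0 := by
  ext w
  rw [fderiv_eq_smul_deriv, h, smul_zero]
  rfl

lemma contDiff_deriv_of_succ {f : ℝ → F} {m : ℕ} (hf : ContDiff ℝ (m + 1 : ℕ) f) :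
    ContDiff ℝ (m : ℕ) (deriv f) := by
  have : ContDiff ℝ ((m : WithTop ℕ∞) + 1) f := by exact_mod_cast hf
  exact_mod_cast (contDiff_succ_iff_deriv.mp this).2.2

lemma second_fderiv_zero_of_second_deriv_zero {f : ℝ → F} (hf : ContDiff ℝ 3 f)
    (h2 : deriv (deriv f) 0 = 0) :
    fderiv ℝ (fderiv ℝ f) 0 = 0 := by
  have hfd : (fderiv ℝ f) = fun y => (smulRightL ℝ ℝ F) (1 : ℝ →L[ℝ] ℝ) (deriv f y) :=
    funext fun y => by ext; simp
  rw [hfd]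
  have hderiv : DifferentiableAt ℝ (deriv f) 0 := by
    have h3 : ContDiff ℝ ((2 : ℕ) + 1 : ℕ) f := by exact_mod_cast hf
    exact (contDiff_deriv_of_succ h3).differentiable (by norm_num) 0
  have hc := (((smulRightL ℝ ℝ F) (1 : ℝ →L[ℝ] ℝ)).hasFDerivAt.comp 0
    hderiv.hasFDerivAt).fderiv
  rw [show (fun y => ((smulRightL ℝ ℝ F) 1) (deriv f y)) = ⇑((smulRightL ℝ ℝ F) 1) ∘ deriv f from rfl,
    hc, fderiv_zero_of_deriv_zero (f := deriv f) h2]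
  exact ContinuousLinearMap.comp_zero _

/-- 1-D: `C²` with vanishing first derivative at `0` gives `O(h²)`. -/
lemma oneD_isBigO_sq {f : ℝ → F} (hf : ContDiff ℝ 2 f) (h1 : deriv f 0 = 0) :
    (fun h : ℝ => f h - f 0) =O[𝓝 0] (fun h : ℝ => h ^ 2) := by
  have hO := isBigO_sq_of_jet_zero isOpen_univ (Set.mem_univ (0:ℝ)) hf.contDiffOn
    (fderiv_zero_of_deriv_zero h1)
  refine hO.trans ?_
  apply IsBigO.of_bound 1
  filter_upwards with y
  simp [abs_pow]

/-- 1-D: `C³` with vanishing first and second derivatives at `0` gives `O(h³)`. -/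
lemma oneD_isBigO_cube {f : ℝ → F} (hf : ContDiff ℝ 3 f) (h1 : deriv f 0 = 0)
    (h2 : deriv (deriv f) 0 = 0) :
    (fun h : ℝ => f h - f 0) =O[𝓝 0] (fun h : ℝ => h ^ 3) := by
  have hO := isBigO_cube_of_jet_zero isOpen_univ (Set.mem_univ (0:ℝ)) hf.contDiffOn
    (fderiv_zero_of_deriv_zero h1) (second_fderiv_zero_of_second_deriv_zero hf h2)
  refine hO.trans ?_
  apply IsBigO.of_bound 1
  filter_upwards with y
  simp [abs_pow]


lemma diffAt_fderiv {f : E → F} {s : Set E} (hs : IsOpen s) {p : E} (hp : p ∈ s)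
    (hf : ContDiffOn ℝ 2 f s) : DifferentiableAt ℝ (fderiv ℝ f) p :=
  ((hf.fderiv_of_isOpen hs (m := 1) (by norm_num)).contDiffAt (hs.mem_nhds hp)).differentiableAt one_ne_zero

end Helpers

section Slices

open ContinuousLinearMap

variable {E F G : Type*} [NormedAddCommGroup E] [NormedSpace ℝ E]
  [NormedAddCommGroup F] [NormedSpace ℝ F] [NormedAddCommGroup G] [NormedSpace ℝ G]

/-- If both partial slices of `D` at `(x,0)` have vanishing derivative, so does `D`. -/
lemma fderiv_zero_of_slices {D : E × F → G} {x : E}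
    (hdiff : DifferentiableAt ℝ D (x, 0))
    (hx : ∀ᶠ y in 𝓝 x, D (y, (0 : F)) = 0)
    (hvslice : fderiv ℝ (fun w : F => D (x, w)) 0 = 0) :
    fderiv ℝ D (x, 0) = 0 := by
  have h1 : HasFDerivAt (fun y : E => D (y, (0 : F)))
      ((fderiv ℝ D (x, 0)).comp (inl ℝ E F)) x :=
    HasFDerivAt.comp (𝕜 := ℝ) x hdiff.hasFDerivAt (hasFDerivAt_prodMk_left x 0)
  have e1 : (fderiv ℝ D (x, 0)).comp (inl ℝ E F) = 0 := by
    rw [← h1.fderiv]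
    have : (fun y : E => D (y, (0 : F))) =ᶠ[𝓝 x] (fun _ => (0 : G)) := hx
    rw [this.fderiv_eq, fderiv_fun_const]
    rfl
  have h2 : HasFDerivAt (fun w : F => D (x, w))
      ((fderiv ℝ D (x, 0)).comp (inr ℝ E F)) 0 :=
    HasFDerivAt.comp (𝕜 := ℝ) 0 hdiff.hasFDerivAt (hasFDerivAt_prodMk_right x 0)
  have e2 : (fderiv ℝ D (x, 0)).comp (inr ℝ E F) = 0 := by
    rw [← h2.fderiv, hvslice]
  refine ContinuousLinearMap.ext fun q => ?_
  have hq : q = inl ℝ E F q.1 + inr ℝ E F q.2 := by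
    simp
  rw [hq, map_add]
  have e1' := congrFun (congrArg DFunLike.coe e1) q.1
  have e2' := congrFun (congrArg DFunLike.coe e2) q.2
  simp only [ContinuousLinearMap.coe_comp', Function.comp_apply,
    ContinuousLinearMap.zero_apply] at e1' e2'
  rw [e1', e2', add_zero]
  rfl

/-- Second derivative vanishes at `(x₀, 0)` given flatness along the first slice
and oddness along the second slice. -/
lemma second_fderiv_zero_of_slices {D : E × F → G} {x₀ : E}
    (hdiff : ∀ᶠ p in 𝓝 ((x₀, 0) : E × F), DifferentiableAt ℝ D p)
    (hg : DifferentiableAt ℝ (fderiv ℝ D) (x₀, 0))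
    (hflat : ∀ᶠ y in 𝓝 x₀, fderiv ℝ D (y, (0 : F)) = 0)
    (hodd : ∀ᶠ w in 𝓝 (0 : F), D (x₀, -w) = -D (x₀, w))
    (hsliceC2 : DifferentiableAt ℝ (fderiv ℝ (fun w : F => D (x₀, w))) 0) :
    fderiv ℝ (fderiv ℝ D) (x₀, 0) = 0 := by
  set M := fderiv ℝ (fderiv ℝ D) (x₀, 0) with hM
  -- Step 1 : M ∘ inl = 0
  have h1 : HasFDerivAt (fun y : E => fderiv ℝ D (y, (0 : F)))
      (M.comp (inl ℝ E F)) x₀ :=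
    HasFDerivAt.comp (𝕜 := ℝ) x₀ hg.hasFDerivAt (hasFDerivAt_prodMk_left x₀ 0)
  have e1 : M.comp (inl ℝ E F) = 0 := by
    rw [← h1.fderiv]
    have : (fun y : E => fderiv ℝ D (y, (0 : F))) =ᶠ[𝓝 x₀]
        (fun _ => (0 : E × F →L[ℝ] G)) := hflat
    rw [this.fderiv_eq, fderiv_fun_const]
    rfl
  -- Step 2 : symmetry of M
  have hsymm : ∀ a b : E × F, M a b = M b a := by
    intro a b
    refine second_derivative_symmetric_of_eventually (f := D) ?_ hg.hasFDerivAt a b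
    filter_upwards [hdiff] with p hp
    exact hp.hasFDerivAt
  -- Step 3 : M (inr w') (inr w) = 0
  have htend : Filter.Tendsto (fun w : F => ((x₀, w) : E × F)) (𝓝 0) (𝓝 (x₀, 0)) := by
    exact (Continuous.prodMk continuous_const continuous_id).tendsto 0
  have hsdiff : ∀ᶠ w in 𝓝 (0 : F), DifferentiableAt ℝ (fun w : F => D (x₀, w)) w := by
    filter_upwards [htend.eventually hdiff] with w hw
    exact DifferentiableAt.comp (𝕜 := ℝ) w hw
      ((differentiableAt_const x₀).prodMk differentiableAt_id)
  have hslice2 : fderiv ℝ (fderiv ℝ (fun w : F => D (x₀, w))) 0 = 0 :=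
    second_fderiv_zero_of_odd hsdiff hsliceC2 hodd
  -- identify fderiv of the slice with the composed map
  set Pre : (E × F →L[ℝ] G) →L[ℝ] (F →L[ℝ] G) :=
    (ContinuousLinearMap.compL ℝ F (E × F) G).flip (inr ℝ E F) with hPre
  have hfs : (fderiv ℝ (fun w : F => D (x₀, w))) =ᶠ[𝓝 (0 : F)]
      (fun w => Pre (fderiv ℝ D (x₀, w))) := by
    filter_upwards [htend.eventually hdiff] with w hw
    have : HasFDerivAt (fun w : F => D (x₀, w))
        ((fderiv ℝ D (x₀, w)).comp (inr ℝ E F)) w :=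
      HasFDerivAt.comp (𝕜 := ℝ) w hw.hasFDerivAt (hasFDerivAt_prodMk_right x₀ w)
    rw [this.fderiv]
    rfl
  have hcompder : HasFDerivAt (fun w : F => Pre (fderiv ℝ D (x₀, w)))
      (Pre.comp (M.comp (inr ℝ E F))) 0 := by
    have hinner : HasFDerivAt (fun w : F => fderiv ℝ D (x₀, w))
        (M.comp (inr ℝ E F)) 0 :=
      HasFDerivAt.comp (𝕜 := ℝ) 0 hg.hasFDerivAt (hasFDerivAt_prodMk_right x₀ 0)
    exact HasFDerivAt.comp (𝕜 := ℝ) 0 Pre.hasFDerivAt hinner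
  have e3 : Pre.comp (M.comp (inr ℝ E F)) = 0 := by
    rw [← hcompder.fderiv, ← hfs.fderiv_eq, hslice2]
  -- Step 4 : assemble
  refine ContinuousLinearMap.ext fun a => ContinuousLinearMap.ext fun b => ?_
  have ha : a = inl ℝ E F a.1 + inr ℝ E F a.2 := by simp
  have hb : b = inl ℝ E F b.1 + inr ℝ E F b.2 := by simp
  have hMinl : ∀ (ξ : E) (q : E × F), M (inl ℝ E F ξ) q = 0 := by
    intro ξ q
    have := congrFun (congrArg DFunLike.coe e1) ξ
    simp only [ContinuousLinearMap.coe_comp', Function.comp_apply,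
      ContinuousLinearMap.zero_apply] at this
    rw [this]
    rfl
  have hMinr : ∀ w' w : F, M (inr ℝ E F w') (inr ℝ E F w) = 0 := by
    intro w' w
    have := congrFun (congrArg DFunLike.coe (congrFun (congrArg DFunLike.coe e3) w')) w
    simpa [hPre] using this
  have h4 : M (inr ℝ E F a.2) (inl ℝ E F b.1) = 0 := by
    rw [hsymm]; exact hMinl b.1 _
  rw [ha, hb]
  simp only [map_add, ContinuousLinearMap.add_apply, ContinuousLinearMap.zero_apply, hMinl, hMinr, h4, add_zero, zero_add]

end Slices



noncomputable section

/-- a symmetric C³ discretization map (`R = R*`, where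
`R*(x,v) = (R²(x,−v), R¹(x,−v))`, in particular `U = U*`) yields a second-order
integrator: the one-step error `Φ(h) − γ(h)` is `O(h³)` as `h → 0`. -/
theorem symmetric_discretization_is_second_order
    {n : ℕ} (U : Set ((Fin n → ℝ) × (Fin n → ℝ)))
    (R : (Fin n → ℝ) × (Fin n → ℝ) → (Fin n → ℝ) × (Fin n → ℝ))
    (hR : IsDiscretizationMap n U R)
    (hRC3 : ContDiffOn ℝ 3 R U)
    (hUsym : ∀ p : (Fin n → ℝ) × (Fin n → ℝ), p ∈ U ↔ (p.1, -p.2) ∈ U)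
    (hsym : ∀ p ∈ U, R p = ((R (p.1, -p.2)).2, (R (p.1, -p.2)).1))
    (X : (Fin n → ℝ) → (Fin n → ℝ)) (hX : ContDiff ℝ 2 X)
    (γ : ℝ → (Fin n → ℝ)) (hγ : ContDiff ℝ 3 γ)
    (x₀ : Fin n → ℝ) (hγ0 : γ 0 = x₀)
    (hode : ∀ t : ℝ, deriv γ t = X (γ t))
    (ε : ℝ) (hε : 0 < ε)
    (z v : ℝ → (Fin n → ℝ))
    (hz : ContDiffOn ℝ 2 z (Set.Ioo (-ε) ε))
    (hv : ContDiffOn ℝ 2 v (Set.Ioo (-ε) ε))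
    (hmem : ∀ h ∈ Set.Ioo (-ε) ε, (z h, v h) ∈ U)
    (hveq : ∀ h ∈ Set.Ioo (-ε) ε, v h = h • X (z h))
    (hfix : ∀ h ∈ Set.Ioo (-ε) ε, (R (z h, v h)).1 = x₀) :
    (fun h : ℝ => (R (z h, v h)).2 - γ h) =O[𝓝 (0 : ℝ)] fun h : ℝ => h ^ 3 := by
  obtain ⟨hUopen, hU0, hR0, hRd⟩ := hR
  set D : ((Fin n → ℝ) × (Fin n → ℝ)) → (Fin n → ℝ) :=
    fun p => (R p).2 - (R p).1 - p.2 with hDdef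
  set Θ : ((Fin n → ℝ) × (Fin n → ℝ)) → (Fin n → ℝ) :=
    fun p => (R p).1 - p.1 + (2⁻¹ : ℝ) • p.2 with hΘdef
  have h0mem : (0 : ℝ) ∈ Set.Ioo (-ε) ε := ⟨neg_lt_zero.mpr hε, hε⟩
  have hIoo : Set.Ioo (-ε) ε ∈ 𝓝 (0 : ℝ) := isOpen_Ioo.mem_nhds h0mem
  have hv0 : v 0 = 0 := by rw [hveq 0 h0mem, zero_smul]
  have hz0 : z 0 = x₀ := by
    have h := hfix 0 h0mem
    rw [hv0, hR0 (z 0)] at h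
    exact h
  -- smoothness of `D` and `Θ`
  have hR2 : ContDiffOn ℝ 3 (fun p => (R p).2) U := contDiff_snd.comp_contDiffOn hRC3
  have hR1 : ContDiffOn ℝ 3 (fun p => (R p).1) U := contDiff_fst.comp_contDiffOn hRC3
  have hDC3 : ContDiffOn ℝ 3 D U := (hR2.sub hR1).sub contDiff_snd.contDiffOn
  have hΘC2 : ContDiffOn ℝ 2 Θ U :=
    ((hR1.sub contDiff_fst.contDiffOn).add
      (((contDiff_const (c := (2⁻¹ : ℝ))).smul contDiff_snd).contDiffOn)).of_le (by norm_num : (2 : WithTop ℕ∞) ≤ 3)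
  have hDdiff : ∀ q ∈ U, DifferentiableAt ℝ D q := fun q hq =>
    (hDC3.contDiffAt (hUopen.mem_nhds hq)).differentiableAt (by norm_num)
  -- first-order jet of D vanishes on the zero section
  have hDx0 : ∀ y, D (y, (0 : Fin n → ℝ)) = 0 := by
    intro y; simp [hDdef, hR0 y]
  have hDv : ∀ x, fderiv ℝ (fun w => D (x, w)) 0 = 0 := by
    intro x
    have hsec : DifferentiableAt ℝ (fun w : Fin n → ℝ => ((x, w) : _ × _)) 0 :=
      (differentiableAt_const x).prodMk differentiableAt_id
    have hdiffR : DifferentiableAt ℝ (fun w => ((R (x, w)).2 - (R (x, w)).1)) 0 := by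
      have h1 : DifferentiableAt ℝ (fun p => (R p).2 - (R p).1) (x, 0) :=
        ((hR2.sub hR1).contDiffAt (hUopen.mem_nhds (hU0 x))).differentiableAt (by norm_num)
      exact DifferentiableAt.comp (𝕜 := ℝ) 0 h1 hsec
    have heq : (fun w => D (x, w)) =
        fun w => ((R (x, w)).2 - (R (x, w)).1) - w := rfl
    rw [heq, fderiv_fun_sub hdiffR differentiableAt_fun_id, hRd x, fderiv_id']
    simp
  have hDjet1 : ∀ x, fderiv ℝ D (x, 0) = 0 := fun x =>
    fderiv_zero_of_slices (hDdiff _ (hU0 x))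
      (Filter.Eventually.of_forall hDx0) (hDv x)
  -- oddness of the v-slice at x₀
  have htendw : Filter.Tendsto (fun w : Fin n → ℝ => ((x₀, w) : _ × _)) (𝓝 0) (𝓝 (x₀, 0)) :=
    (Continuous.prodMk continuous_const continuous_id).tendsto 0
  have hUev : ∀ᶠ w in 𝓝 (0 : Fin n → ℝ), ((x₀, w) : _ × _) ∈ U :=
    htendw.eventually_mem (hUopen.mem_nhds (hU0 x₀))
  have hDodd : ∀ᶠ w in 𝓝 (0 : Fin n → ℝ), D (x₀, -w) = -D (x₀, w) := by
    filter_upwards [hUev] with w hw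
    have hs := hsym (x₀, w) hw
    have h2 : (R (x₀, w)).2 = (R (x₀, -w)).1 := by rw [hs]
    have h1 : (R (x₀, w)).1 = (R (x₀, -w)).2 := by rw [hs]
    simp only [hDdef, h1, h2]
    abel
  -- second-order jet of D vanishes at (x₀, 0)
  have hsliceopen : IsOpen ((fun w : Fin n → ℝ => ((x₀, w) : _ × _)) ⁻¹' U) :=
    hUopen.preimage (Continuous.prodMk continuous_const continuous_id)
  have hslice0 : (0 : Fin n → ℝ) ∈ (fun w : Fin n → ℝ => ((x₀, w) : _ × _)) ⁻¹' U := hU0 x₀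
  have hsliceC3 : ContDiffOn ℝ 3 (fun w => D (x₀, w))
      ((fun w : Fin n → ℝ => ((x₀, w) : _ × _)) ⁻¹' U) := by
    apply hDC3.comp ((contDiff_const.prodMk contDiff_id).contDiffOn)
    exact Set.mapsTo_preimage _ _
  have hDjet2 : fderiv ℝ (fderiv ℝ D) (x₀, 0) = 0 := by
    apply second_fderiv_zero_of_slices
    · exact Filter.eventually_of_mem (hUopen.mem_nhds (hU0 x₀)) hDdiff
    · exact diffAt_fderiv hUopen (hU0 x₀) (hDC3.of_le (by norm_num))
    · exact Filter.Eventually.of_forall hDjet1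
    · exact hDodd
    · exact diffAt_fderiv hsliceopen hslice0 (hsliceC3.of_le (by norm_num))
  have hD00 : D (x₀, (0 : Fin n → ℝ)) = 0 := hDx0 x₀
  have hDO := isBigO_cube_of_jet_zero hUopen (hU0 x₀) hDC3 (hDjet1 x₀) hDjet2
  -- first-order jet of Θ vanishes at (x₀, 0)
  have hΘx0 : ∀ᶠ y in 𝓝 x₀, Θ (y, (0 : Fin n → ℝ)) = 0 := by
    refine Filter.Eventually.of_forall fun y => ?_
    simp [hΘdef, hR0 y]
  have hF1diff : DifferentiableAt ℝ (fun w => (R (x₀, w)).1) 0 := by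
    have h1 : DifferentiableAt ℝ (fun p => (R p).1) ((x₀, 0) : _ × _) :=
      (hR1.contDiffAt (hUopen.mem_nhds (hU0 x₀))).differentiableAt (by norm_num)
    exact DifferentiableAt.comp (𝕜 := ℝ) (g := fun p => (R p).1)
      (f := fun w : Fin n → ℝ => ((x₀, w) : _ × _)) 0 h1
      ((differentiableAt_const x₀).prodMk differentiableAt_id)
  have hF2diff : DifferentiableAt ℝ (fun w => (R (x₀, w)).2) 0 := by
    have h1 : DifferentiableAt ℝ (fun p => (R p).2) ((x₀, 0) : _ × _) :=
      (hR2.contDiffAt (hUopen.mem_nhds (hU0 x₀))).differentiableAt (by norm_num)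
    exact DifferentiableAt.comp (𝕜 := ℝ) (g := fun p => (R p).2)
      (f := fun w : Fin n → ℝ => ((x₀, w) : _ × _)) 0 h1
      ((differentiableAt_const x₀).prodMk differentiableAt_id)
  have hBval : fderiv ℝ (fun w => (R (x₀, w)).1) 0
      = -((2⁻¹ : ℝ) • ContinuousLinearMap.id ℝ (Fin n → ℝ)) := by
    set B := fderiv ℝ (fun w => (R (x₀, w)).1) 0 with hB
    -- F₁ = F₂ ∘ neg near 0
    have hev : (fun w => (R (x₀, w)).1) =ᶠ[𝓝 (0 : Fin n → ℝ)]
        (fun w => (R (x₀, -w)).2) := by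
      filter_upwards [hUev] with w hw
      rw [hsym (x₀, w) hw]
    have hnegd : HasFDerivAt (fun u : Fin n → ℝ => -u)
        (-(ContinuousLinearMap.id ℝ (Fin n → ℝ))) 0 := (hasFDerivAt_id _).neg
    have hF2neg : HasFDerivAt (fun w => (R (x₀, -w)).2)
        ((fderiv ℝ (fun w => (R (x₀, w)).2) 0).comp
          (-(ContinuousLinearMap.id ℝ (Fin n → ℝ)))) 0 := by
      have := HasFDerivAt.comp (𝕜 := ℝ) (0 : Fin n → ℝ)
        (f := fun u : Fin n → ℝ => -u) (g := fun w => (R (x₀, w)).2)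
        (by simpa using hF2diff.hasFDerivAt) hnegd
      simpa using this
    have hBF2 : B = (fderiv ℝ (fun w => (R (x₀, w)).2) 0).comp
        (-(ContinuousLinearMap.id ℝ (Fin n → ℝ))) := by
      rw [hB, hev.fderiv_eq, hF2neg.fderiv]
    have hBF2' : B = -(fderiv ℝ (fun w => (R (x₀, w)).2) 0) := by
      rw [hBF2]
      ext w'
      simp
    have hsub : fderiv ℝ (fun w => ((R (x₀, w)).2 - (R (x₀, w)).1)) 0
        = fderiv ℝ (fun w => (R (x₀, w)).2) 0 - B := fderiv_sub hF2diff hF1diff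
    have hid := hRd x₀
    rw [hsub] at hid
    have hF2B : fderiv ℝ (fun w => (R (x₀, w)).2) 0 = -B := by
      rw [hBF2']; simp
    rw [hF2B] at hid
    -- -B - B = id  ⇒  B = -(2⁻¹) • id
    have h2B : (2 : ℝ) • B = -(ContinuousLinearMap.id ℝ (Fin n → ℝ)) := by
      rw [two_smul, ← neg_eq_iff_eq_neg]
      rw [← hid]
      abel
    have : B = (2⁻¹ : ℝ) • ((2 : ℝ) • B) := by
      rw [smul_smul]; norm_num
    rw [this, h2B, smul_neg]
  have hΘjet1 : fderiv ℝ Θ ((x₀, 0) : _ × _) = 0 := by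
    apply fderiv_zero_of_slices
    · exact (hΘC2.contDiffAt (hUopen.mem_nhds (hU0 x₀))).differentiableAt (by norm_num)
    · exact hΘx0
    · have heq : (fun w => Θ (x₀, w)) =
          fun w => ((R (x₀, w)).1 - x₀) + (2⁻¹ : ℝ) • w := rfl
      rw [heq, fderiv_fun_add (hF1diff.sub_const x₀)
        (by fun_prop : DifferentiableAt ℝ (fun w : Fin n → ℝ => (2⁻¹ : ℝ) • w) 0),
        fderiv_sub_const, hBval, fderiv_fun_const_smul differentiableAt_fun_id, fderiv_id']
      simp
  have hΘ00 : Θ ((x₀, 0) : _ × _) = 0 := by simp [hΘdef, hR0 x₀]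
  have hΘO := isBigO_sq_of_jet_zero hUopen (hU0 x₀) hΘC2 hΘjet1
  -- curve facts
  have hzAt : ContDiffAt ℝ 2 z 0 := hz.contDiffAt hIoo
  have hvAt : ContDiffAt ℝ 2 v 0 := hv.contDiffAt hIoo
  have hzO : (fun h => z h - x₀) =O[𝓝 (0 : ℝ)] (fun h => h) := by
    have h1 := (hzAt.differentiableAt (by norm_num)).isBigO_sub
    rw [hz0] at h1
    simpa using h1
  have hvO : (fun h => v h) =O[𝓝 (0 : ℝ)] (fun h => h) := by
    have h1 := (hvAt.differentiableAt (by norm_num)).isBigO_sub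
    rw [hv0] at h1
    simpa using h1
  have hwten : Filter.Tendsto (fun h => ((z h, v h) : _ × _)) (𝓝 (0 : ℝ)) (𝓝 (x₀, 0)) := by
    rw [← hz0, ← hv0]
    exact (hzAt.continuousAt.prodMk hvAt.continuousAt).tendsto
  have hwO : (fun h => ((z h, v h) : _ × _) - (x₀, 0)) =O[𝓝 (0 : ℝ)] fun h => h := by
    have : (fun h => ((z h, v h) : _ × _) - (x₀, 0))
        = fun h => ((z h - x₀, v h - 0) : _ × _) := rfl
    rw [this]
    refine Asymptotics.isBigO_prod_left.mpr ⟨hzO, ?_⟩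
    simpa using hvO
  have hwnormO : (fun h => ‖((z h, v h) : _ × _) - ((x₀, 0) : _ × _)‖)
      =O[𝓝 (0 : ℝ)] fun h => h := hwO.norm_left
  have hDcurve : (fun h => D (z h, v h)) =O[𝓝 (0 : ℝ)] fun h => h ^ 3 := by
    have h1 := hDO.comp_tendsto hwten
    have h2 : (fun h => D (z h, v h)) =O[𝓝 (0 : ℝ)]
        fun h => ‖((z h, v h) : _ × _) - ((x₀, 0) : _ × _)‖ ^ 3 := by
      simpa [Function.comp_def, hD00] using h1
    exact h2.trans (hwnormO.pow 3)
  have hΘcurve : (fun h => Θ (z h, v h)) =O[𝓝 (0 : ℝ)] fun h => h ^ 2 := by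
    have h1 := hΘO.comp_tendsto hwten
    have h2 : (fun h => Θ (z h, v h)) =O[𝓝 (0 : ℝ)]
        fun h => ‖((z h, v h) : _ × _) - ((x₀, 0) : _ × _)‖ ^ 2 := by
      simpa [Function.comp_def, hΘ00] using h1
    exact h2.trans (hwnormO.pow 2)
  -- one-dimensional Taylor facts for γ
  set c₁ : Fin n → ℝ := deriv γ 0 with hc₁def
  set c₂ : Fin n → ℝ := deriv (deriv γ) 0 with hc₂def
  have hc₁ : c₁ = X x₀ := by rw [hc₁def, hode 0, hγ0]
  have hγd : Differentiable ℝ γ := hγ.differentiable (by norm_num)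
  have hγ3 : ContDiff ℝ ((2 : ℕ) + 1 : ℕ) γ := by exact_mod_cast hγ
  have hdγC2 : ContDiff ℝ 2 (deriv γ) := by exact_mod_cast contDiff_deriv_of_succ hγ3
  have hdγd : Differentiable ℝ (deriv γ) := hdγC2.differentiable (by norm_num)
  set f₄ : ℝ → (Fin n → ℝ) := fun h => γ h - x₀ - h • c₁ - (h ^ 2 / 2) • c₂ with hf₄def
  have hf₄C3 : ContDiff ℝ 3 f₄ :=
    ((hγ.sub contDiff_const).sub (contDiff_id.smul contDiff_const)).sub
      (((contDiff_id.pow 2).div_const 2).smul contDiff_const)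
  have hf₄deriv : deriv f₄ = fun h => deriv γ h - c₁ - h • c₂ := by
    funext h
    have h1 : HasDerivAt γ (deriv γ h) h := (hγd h).hasDerivAt
    have h2 : HasDerivAt (fun t : ℝ => t • c₁) ((1 : ℝ) • c₁) h :=
      (hasDerivAt_id h).smul_const c₁
    have h3 : HasDerivAt (fun t : ℝ => (t ^ 2 / 2) • c₂)
        ((2 * h ^ 1 / 2) • c₂) h := ((hasDerivAt_pow 2 h).div_const 2).smul_const c₂
    have h4 := (((h1.sub_const x₀).fun_sub h2).fun_sub h3).deriv
    rw [hf₄def, h4]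
    have : (2 * h ^ 1 / 2) = h := by ring
    rw [this, one_smul]
  have hf₄1 : deriv f₄ 0 = 0 := by rw [hf₄deriv]; simp [hc₁def]
  have hf₄2 : deriv (deriv f₄) 0 = 0 := by
    rw [hf₄deriv]
    have h1 : HasDerivAt (deriv γ) (deriv (deriv γ) 0) 0 := (hdγd 0).hasDerivAt
    have h2 : HasDerivAt (fun t : ℝ => t • c₂) ((1 : ℝ) • c₂) 0 :=
      (hasDerivAt_id 0).smul_const c₂
    have h3 := ((h1.sub_const c₁).fun_sub h2).deriv
    rw [h3, one_smul, ← hc₂def, sub_self]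
  have hf₄0 : f₄ 0 = 0 := by
    rw [show f₄ 0 = γ 0 - x₀ - (0 : ℝ) • c₁ - ((0 : ℝ) ^ 2 / 2) • c₂ from rfl, hγ0]
    simp
  have hf₄O : f₄ =O[𝓝 (0 : ℝ)] fun h => h ^ 3 := by
    have := oneD_isBigO_cube hf₄C3 hf₄1 hf₄2
    simpa [hf₄0] using this
  set u : ℝ → (Fin n → ℝ) := fun h => deriv γ (h / 2) - c₁ - (h / 2) • c₂ with hudef
  have hhalf : ContDiff ℝ 2 (fun h : ℝ => h / 2) := contDiff_id.div_const 2
  have huC2 : ContDiff ℝ 2 u :=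
    ((hdγC2.comp hhalf).sub contDiff_const).sub (hhalf.smul contDiff_const)
  have hu0 : u 0 = 0 := by
    rw [show u 0 = deriv γ ((0 : ℝ) / 2) - c₁ - ((0 : ℝ) / 2) • c₂ from rfl]
    norm_num [hc₁def]
  have hhalfd : HasDerivAt (fun h : ℝ => h / 2) ((1 : ℝ) / 2) 0 :=
    (hasDerivAt_id 0).div_const 2
  have hu1 : deriv u 0 = 0 := by
    have h1 : HasDerivAt (fun h : ℝ => deriv γ (h / 2))
        (((1 : ℝ) / 2) • deriv (deriv γ) ((0 : ℝ) / 2)) 0 :=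
      HasDerivAt.scomp (g₁ := deriv γ) (h := fun t : ℝ => t / 2) 0 ((hdγd ((0 : ℝ) / 2)).hasDerivAt) hhalfd
    have h2 : HasDerivAt (fun h : ℝ => (h / 2) • c₂) (((1 : ℝ) / 2) • c₂) 0 :=
      hhalfd.smul_const c₂
    have h3 := ((h1.sub_const c₁).fun_sub h2).deriv
    rw [h3]
    norm_num [hc₂def]
  have huO : u =O[𝓝 (0 : ℝ)] fun h => h ^ 2 := by
    have := oneD_isBigO_sq huC2 hu1
    simpa [hu0] using this
  set f₅ : ℝ → (Fin n → ℝ) := fun h => γ (h / 2) - x₀ - (h / 2) • c₁ with hf₅def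
  have hf₅C2 : ContDiff ℝ 2 f₅ :=
    (((hγ.of_le (by norm_num)).comp hhalf).sub contDiff_const).sub
      (hhalf.smul contDiff_const)
  have hf₅0 : f₅ 0 = 0 := by
    rw [show f₅ 0 = γ ((0 : ℝ) / 2) - x₀ - ((0 : ℝ) / 2) • c₁ from rfl]
    norm_num [hγ0]
  have hf₅1 : deriv f₅ 0 = 0 := by
    have h1 : HasDerivAt (fun h : ℝ => γ (h / 2))
        (((1 : ℝ) / 2) • deriv γ ((0 : ℝ) / 2)) 0 :=
      ((hγd ((0 : ℝ) / 2)).hasDerivAt).scomp 0 hhalfd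
    have h2 : HasDerivAt (fun h : ℝ => (h / 2) • c₁) (((1 : ℝ) / 2) • c₁) 0 :=
      hhalfd.smul_const c₁
    have h3 := ((h1.sub_const x₀).fun_sub h2).deriv
    rw [h3]
    norm_num [hc₁def]
  have hf₅O : f₅ =O[𝓝 (0 : ℝ)] fun h => h ^ 2 := by
    have := oneD_isBigO_sq hf₅C2 hf₅1
    simpa [hf₅0] using this
  -- local Lipschitz bound for X near x₀
  obtain ⟨K, t, htmem, hlip⟩ :=
    ((hX.contDiffAt (x := x₀)).of_le (by norm_num)).exists_lipschitzOnWith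
  have hx₀t : x₀ ∈ t := mem_of_mem_nhds htmem
  have hztend : Filter.Tendsto z (𝓝 (0 : ℝ)) (𝓝 x₀) := by
    rw [← hz0]; exact hzAt.continuousAt.tendsto
  have hzev : ∀ᶠ h in 𝓝 (0 : ℝ), z h ∈ t := hztend.eventually_mem htmem
  have hγtend : Filter.Tendsto (fun h : ℝ => γ (h / 2)) (𝓝 (0 : ℝ)) (𝓝 x₀) := by
    have hcont : Continuous fun h : ℝ => γ (h / 2) :=
      hγ.continuous.comp (continuous_id.div_const 2)
    have := hcont.tendsto 0
    have h0 : γ ((0 : ℝ) / 2) = x₀ := by norm_num [hγ0]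
    rwa [h0] at this
  have hγev : ∀ᶠ h in 𝓝 (0 : ℝ), γ (h / 2) ∈ t := hγtend.eventually_mem htmem
  have hXzx₀ : (fun h => X (z h) - X x₀) =O[𝓝 (0 : ℝ)] fun h => z h - x₀ := by
    rw [Asymptotics.isBigO_iff]
    refine ⟨K, ?_⟩
    filter_upwards [hzev] with h hht
    have hd := hlip.dist_le_mul _ hht _ hx₀t
    rw [dist_eq_norm, dist_eq_norm] at hd
    calc ‖X (z h) - X x₀‖ ≤ K * ‖z h - x₀‖ := hd
      _ ≤ K * ‖z h - x₀‖ := le_rfl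
  have hXzO : (fun h => X (z h) - X x₀) =O[𝓝 (0 : ℝ)] fun h => h := hXzx₀.trans hzO
  have hhalfO : (fun h : ℝ => h / 2) =O[𝓝 (0 : ℝ)] fun h => h := by
    apply Asymptotics.IsBigO.of_bound 1
    filter_upwards with h
    rw [Real.norm_eq_abs, Real.norm_eq_abs, abs_div, one_mul]
    simp only [abs_two]
    linarith [abs_nonneg h]
  have hmidO : (fun h : ℝ => (h / 2) • (X (z h) - X x₀)) =O[𝓝 (0 : ℝ)] fun h => h ^ 2 := by
    have h2 := hhalfO.smul hXzO
    have h3 : (fun h : ℝ => h • h) = fun h : ℝ => h ^ 2 := funext fun h => by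
      rw [smul_eq_mul]; ring
    rwa [h3] at h2
  have hidz : (fun h => z h - γ (h / 2)) =ᶠ[𝓝 (0 : ℝ)]
      (fun h => -Θ (z h, v h) + (h / 2) • (X (z h) - X x₀) - f₅ h) := by
    filter_upwards [hIoo] with h hh
    have hΘh : Θ (z h, v h) = x₀ - z h + (2⁻¹ : ℝ) • (h • X (z h)) := by
      simp only [hΘdef]
      rw [hfix h hh, hveq h hh]
    rw [hΘh, hf₅def, hc₁]
    dsimp only
    module
  have hzγO : (fun h => z h - γ (h / 2)) =O[𝓝 (0 : ℝ)] fun h => h ^ 2 :=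
    hidz.trans_isBigO (((hΘcurve.neg_left).add hmidO).sub hf₅O)
  have hXzγ : (fun h => X (z h) - X (γ (h / 2))) =O[𝓝 (0 : ℝ)] fun h => h ^ 2 := by
    have hstep : (fun h => X (z h) - X (γ (h / 2))) =O[𝓝 (0 : ℝ)]
        fun h => z h - γ (h / 2) := by
      rw [Asymptotics.isBigO_iff]
      refine ⟨K, ?_⟩
      filter_upwards [hzev, hγev] with h hht hgt
      have hd := hlip.dist_le_mul _ hht _ hgt
      rw [dist_eq_norm, dist_eq_norm] at hd
      exact hd
    exact hstep.trans hzγO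
  -- final assembly
  have hmid3 : (fun h : ℝ => h • (X (z h) - X (γ (h / 2)))) =O[𝓝 (0 : ℝ)]
      fun h => h ^ 3 := by
    have h2 := (Asymptotics.isBigO_refl (fun h : ℝ => h) (𝓝 (0 : ℝ))).smul hXzγ
    have h3 : (fun h : ℝ => h • h ^ 2) = fun h : ℝ => h ^ 3 := funext fun h => by
      rw [smul_eq_mul]; ring
    rwa [h3] at h2
  have humul : (fun h : ℝ => h • u h) =O[𝓝 (0 : ℝ)] fun h => h ^ 3 := by
    have h2 := (Asymptotics.isBigO_refl (fun h : ℝ => h) (𝓝 (0 : ℝ))).smul huO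
    have h3 : (fun h : ℝ => h • h ^ 2) = fun h : ℝ => h ^ 3 := funext fun h => by
      rw [smul_eq_mul]; ring
    rwa [h3] at h2
  have hfinal : (fun h : ℝ => (R (z h, v h)).2 - γ h) =ᶠ[𝓝 (0 : ℝ)]
      (fun h => D (z h, v h) + h • (X (z h) - X (γ (h / 2))) - f₄ h + h • u h) := by
    filter_upwards [hIoo] with h hh
    have hDh : D (z h, v h) = (R (z h, v h)).2 - x₀ - h • X (z h) := by
      simp only [hDdef]
      rw [hfix h hh, hveq h hh]
    have huh : u h = X (γ (h / 2)) - c₁ - (h / 2) • c₂ := by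
      rw [hudef]
      dsimp only
      rw [hode (h / 2)]
    rw [hDh, huh, hf₄def]
    dsimp only
    module
  exact hfinal.trans_isBigO (((hDcurve.add hmid3).sub hf₄O).add humul)

end
end

section
/- Let R = (R¹, R²) : U → ℝⁿ × ℝⁿ be a C¹ discretization map on ℝⁿ and let φ : ℝⁿ → ℝⁿ be a C¹ diffeomorphism. Define the tangent lift Tφ(x, v) := (φ(x), Dφ(x)·v) and set R_φ := (φ × φ) ∘ R ∘ (Tφ)⁻¹, defined on the open set Tφ(U), where (Tφ)⁻¹(y, w) = (φ⁻¹(y), (Dφ(φ⁻¹(y)))⁻¹·w). Then R_φ is a discretization map on ℝⁿ: (i) R_φ(y, 0) = (y, y) for all y ∈ ℝⁿ, and (ii) for every y ∈ ℝⁿ, the Fréchet derivative at w = 0 of the map w ↦ R_φ²(y, w) − R_φ¹(y, w) is the identity map on ℝⁿ. -/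
open Topology

noncomputable section

/-- The tangent lift `Tφ(x, v) = (φ(x), Dφ(x)·v)` of a map `φ : ℝⁿ → ℝⁿ`. -/
def Tlift {n : ℕ} (φ : (Fin n → ℝ) → (Fin n → ℝ))
    (p : (Fin n → ℝ) × (Fin n → ℝ)) : (Fin n → ℝ) × (Fin n → ℝ) :=
  (φ p.1, fderiv ℝ φ p.1 p.2)

lemma comp_fderiv_id {n : ℕ} {φ φinv : (Fin n → ℝ) → (Fin n → ℝ)}
    (hφ : ContDiff ℝ 1 φ) (hφinv : ContDiff ℝ 1 φinv)
    (hli : Function.LeftInverse φinv φ) (x : Fin n → ℝ) :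
    (fderiv ℝ φinv (φ x)).comp (fderiv ℝ φ x) = ContinuousLinearMap.id ℝ (Fin n → ℝ) := by
  have h1 : HasFDerivAt (φinv ∘ φ) ((fderiv ℝ φinv (φ x)).comp (fderiv ℝ φ x)) x :=
    ((hφinv.differentiable one_ne_zero (φ x)).hasFDerivAt).comp x
      ((hφ.differentiable one_ne_zero x).hasFDerivAt)
  have h2 : φinv ∘ φ = id := funext hli
  rw [h2] at h1
  exact h1.unique (hasFDerivAt_id x)

lemma Tlift_comp_self {n : ℕ} {φ φinv : (Fin n → ℝ) → (Fin n → ℝ)}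
    (hφ : ContDiff ℝ 1 φ) (hφinv : ContDiff ℝ 1 φinv)
    (hli : Function.LeftInverse φinv φ) (p : (Fin n → ℝ) × (Fin n → ℝ)) :
    Tlift φinv (Tlift φ p) = p := by
  unfold Tlift
  refine Prod.ext (hli p.1) ?_
  show fderiv ℝ φinv (φ p.1) (fderiv ℝ φ p.1 p.2) = p.2
  have h2 : fderiv ℝ φinv (φ p.1) (fderiv ℝ φ p.1 p.2)
      = ((fderiv ℝ φinv (φ p.1)).comp (fderiv ℝ φ p.1)) p.2 := rfl
  rw [h2, comp_fderiv_id hφ hφinv hli p.1, ContinuousLinearMap.id_apply]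

/-- if `R` is a C¹ discretization map on `U` and `φ` is a C¹
diffeomorphism (with C¹ inverse `φinv`), then the lifted map
`R_φ = (φ × φ) ∘ R ∘ (Tφ)⁻¹` (where `(Tφ)⁻¹ = T(φ⁻¹)`) is a discretization map
on the open set `Tφ(U)`. -/
theorem lifted_map_is_discretizationMap
    {n : ℕ} (U : Set ((Fin n → ℝ) × (Fin n → ℝ)))
    (R : (Fin n → ℝ) × (Fin n → ℝ) → (Fin n → ℝ) × (Fin n → ℝ))
    (hR : IsDiscretizationMap n U R)
    (hRC1 : ContDiffOn ℝ 1 R U)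
    (φ φinv : (Fin n → ℝ) → (Fin n → ℝ))
    (hφ : ContDiff ℝ 1 φ) (hφinv : ContDiff ℝ 1 φinv)
    (hli : Function.LeftInverse φinv φ)
    (hri : Function.RightInverse φinv φ) :
    IsDiscretizationMap n (Tlift φ '' U)
      (fun p : (Fin n → ℝ) × (Fin n → ℝ) =>
        (φ ((R (Tlift φinv p)).1), φ ((R (Tlift φinv p)).2))) := by
  obtain ⟨hUopen, hU0, hR0, hRderiv⟩ := hR
  have himg : Tlift φ '' U = Tlift φinv ⁻¹' U := by
    ext p
    constructor
    · rintro ⟨q, hq, rfl⟩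
      show Tlift φinv (Tlift φ q) ∈ U
      rw [Tlift_comp_self hφ hφinv hli q]
      exact hq
    · intro hp
      exact ⟨Tlift φinv p, hp, Tlift_comp_self hφinv hφ hri p⟩
  have hTcont : Continuous (Tlift φinv) := by
    unfold Tlift
    exact (hφinv.continuous.comp continuous_fst).prodMk
      (((hφinv.continuous_fderiv one_ne_zero).comp continuous_fst).clm_apply continuous_snd)
  refine ⟨?_, ?_, ?_, ?_⟩
  · rw [himg]
    exact hUopen.preimage hTcont
  · intro y
    refine ⟨(φinv y, 0), hU0 (φinv y), ?_⟩
    unfold Tlift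
    simp [hri y]
  · intro y
    have h1 : Tlift φinv (y, (0 : Fin n → ℝ)) = (φinv y, 0) := by
      unfold Tlift; simp
    show (φ ((R (Tlift φinv (y, (0 : Fin n → ℝ)))).1), φ ((R (Tlift φinv (y, 0))).2)) = (y, y)
    rw [h1, hR0 (φinv y)]
    simp [hri y]
  · intro y
    set x := φinv y with hx
    have hyx : φ x = y := hri y
    set A := fderiv ℝ φinv y with hA'
    set B := fderiv ℝ φ x with hB'
    have hBA : B.comp A = ContinuousLinearMap.id ℝ (Fin n → ℝ) :=
      comp_fderiv_id hφinv hφ hri y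
    have hxU : (x, (0 : Fin n → ℝ)) ∈ U := hU0 x
    have hRdiff : DifferentiableAt ℝ R (x, 0) :=
      (hRC1.differentiableOn one_ne_zero).differentiableAt (hUopen.mem_nhds hxU)
    set DR := fderiv ℝ R (x, 0) with hDR'
    have hDR : HasFDerivAt R DR (x, 0) := hRdiff.hasFDerivAt
    have hcomp : HasFDerivAt (fun u : Fin n → ℝ => R (x, u))
        (DR.comp (ContinuousLinearMap.inr ℝ (Fin n → ℝ) (Fin n → ℝ))) 0 :=
      hDR.comp 0 (hasFDerivAt_prodMk_right x 0)
    have hsub : HasFDerivAt (fun u : Fin n → ℝ => (R (x, u)).2 - (R (x, u)).1)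
        ((ContinuousLinearMap.snd ℝ (Fin n → ℝ) (Fin n → ℝ)).comp
            (DR.comp (ContinuousLinearMap.inr ℝ (Fin n → ℝ) (Fin n → ℝ))) -
          (ContinuousLinearMap.fst ℝ (Fin n → ℝ) (Fin n → ℝ)).comp
            (DR.comp (ContinuousLinearMap.inr ℝ (Fin n → ℝ) (Fin n → ℝ)))) 0 :=
      hcomp.snd.sub hcomp.fst
    have hid : (ContinuousLinearMap.snd ℝ (Fin n → ℝ) (Fin n → ℝ)).comp
            (DR.comp (ContinuousLinearMap.inr ℝ (Fin n → ℝ) (Fin n → ℝ))) -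
          (ContinuousLinearMap.fst ℝ (Fin n → ℝ) (Fin n → ℝ)).comp
            (DR.comp (ContinuousLinearMap.inr ℝ (Fin n → ℝ) (Fin n → ℝ)))
        = ContinuousLinearMap.id ℝ (Fin n → ℝ) :=
      hsub.fderiv.symm.trans (hRderiv x)
    have key : ∀ w : Fin n → ℝ, (DR ((0 : Fin n → ℝ), w)).2 - (DR ((0 : Fin n → ℝ), w)).1 = w := by
      intro w
      have := congrArg (fun L : (Fin n → ℝ) →L[ℝ] (Fin n → ℝ) => L w) hid
      simpa using this
    have hA : HasFDerivAt (fun v : Fin n → ℝ => ((x, A v) : (Fin n → ℝ) × (Fin n → ℝ)))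
        ((ContinuousLinearMap.inr ℝ (Fin n → ℝ) (Fin n → ℝ)).comp A) 0 :=
      (hasFDerivAt_prodMk_right x (A 0)).comp 0 A.hasFDerivAt
    have hRA : HasFDerivAt (fun v : Fin n → ℝ => R (x, A v))
        (DR.comp ((ContinuousLinearMap.inr ℝ (Fin n → ℝ) (Fin n → ℝ)).comp A)) 0 := by
      refine HasFDerivAt.comp 0 ?_ hA
      simpa using hDR
    have hval2 : (R (x, A (0 : Fin n → ℝ))).2 = x := by simp [hR0 x]
    have hval1 : (R (x, A (0 : Fin n → ℝ))).1 = x := by simp [hR0 x]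
    have hφ2 : HasFDerivAt (fun v : Fin n → ℝ => φ ((R (x, A v)).2))
        (B.comp ((ContinuousLinearMap.snd ℝ (Fin n → ℝ) (Fin n → ℝ)).comp
          (DR.comp ((ContinuousLinearMap.inr ℝ (Fin n → ℝ) (Fin n → ℝ)).comp A)))) 0 := by
      refine HasFDerivAt.comp 0 ?_ hRA.snd
      show HasFDerivAt φ B ((R (x, A (0 : Fin n → ℝ))).2)
      rw [hval2]
      exact (hφ.differentiable one_ne_zero x).hasFDerivAt
    have hφ1 : HasFDerivAt (fun v : Fin n → ℝ => φ ((R (x, A v)).1))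
        (B.comp ((ContinuousLinearMap.fst ℝ (Fin n → ℝ) (Fin n → ℝ)).comp
          (DR.comp ((ContinuousLinearMap.inr ℝ (Fin n → ℝ) (Fin n → ℝ)).comp A)))) 0 := by
      refine HasFDerivAt.comp 0 ?_ hRA.fst
      show HasFDerivAt φ B ((R (x, A (0 : Fin n → ℝ))).1)
      rw [hval1]
      exact (hφ.differentiable one_ne_zero x).hasFDerivAt
    have hg : HasFDerivAt (fun v : Fin n → ℝ => φ ((R (x, A v)).2) - φ ((R (x, A v)).1))
        (B.comp ((ContinuousLinearMap.snd ℝ (Fin n → ℝ) (Fin n → ℝ)).comp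
          (DR.comp ((ContinuousLinearMap.inr ℝ (Fin n → ℝ) (Fin n → ℝ)).comp A))) -
         B.comp ((ContinuousLinearMap.fst ℝ (Fin n → ℝ) (Fin n → ℝ)).comp
          (DR.comp ((ContinuousLinearMap.inr ℝ (Fin n → ℝ) (Fin n → ℝ)).comp A)))) 0 :=
      hφ2.sub hφ1
    have hfinal : (B.comp ((ContinuousLinearMap.snd ℝ (Fin n → ℝ) (Fin n → ℝ)).comp
          (DR.comp ((ContinuousLinearMap.inr ℝ (Fin n → ℝ) (Fin n → ℝ)).comp A))) -
         B.comp ((ContinuousLinearMap.fst ℝ (Fin n → ℝ) (Fin n → ℝ)).comp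
          (DR.comp ((ContinuousLinearMap.inr ℝ (Fin n → ℝ) (Fin n → ℝ)).comp A))))
        = ContinuousLinearMap.id ℝ (Fin n → ℝ) := by
      refine ContinuousLinearMap.ext fun v => ?_
      simp only [ContinuousLinearMap.sub_apply, ContinuousLinearMap.comp_apply,
        ContinuousLinearMap.coe_snd', ContinuousLinearMap.coe_fst',
        ContinuousLinearMap.inr_apply, ContinuousLinearMap.id_apply]
      rw [← map_sub B, key (A v)]
      have := congrArg (fun L : (Fin n → ℝ) →L[ℝ] (Fin n → ℝ) => L v) hBA
      simpa using this
    show fderiv ℝ (fun v : Fin n → ℝ => φ ((R (x, A v)).2) - φ ((R (x, A v)).1)) 0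
        = ContinuousLinearMap.id ℝ (Fin n → ℝ)
    rw [hg.fderiv, hfinal]
end
end

section
/- Let R = (R¹, R²) : U → ℝⁿ × ℝⁿ be a discretization map on ℝⁿ that is symmetric (R = R*, where R*(x, v) := (R²(x, −v), R¹(x, −v))), and let φ : ℝⁿ → ℝⁿ be a C¹ diffeomorphism. Then the lifted map R_φ := (φ × φ) ∘ R ∘ (Tφ)⁻¹, defined on Tφ(U) with Tφ(x, v) := (φ(x), Dφ(x)·v), is also symmetric: R_φ = (R_φ)*. -/
open Topology

noncomputable section

/-- The adjoint `S*(x, v) = (S²(x, −v), S¹(x, −v))` of a map `S : ℝⁿ × ℝⁿ → ℝⁿ × ℝⁿ`. -/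
def adjointMap {n : ℕ}
    (S : (Fin n → ℝ) × (Fin n → ℝ) → (Fin n → ℝ) × (Fin n → ℝ))
    (p : (Fin n → ℝ) × (Fin n → ℝ)) : (Fin n → ℝ) × (Fin n → ℝ) :=
  ((S (p.1, -p.2)).2, (S (p.1, -p.2)).1)

/-- if `R` is a symmetric discretization map (`R = R*`, in particular
`U = U*`) and `φ` is a C¹ diffeomorphism, then the lifted map
`R_φ = (φ × φ) ∘ R ∘ (Tφ)⁻¹` is also symmetric on its domain `Tφ(U)`. -/
theorem lift_of_symmetric_is_symmetric
    {n : ℕ} (U : Set ((Fin n → ℝ) × (Fin n → ℝ)))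
    (R : (Fin n → ℝ) × (Fin n → ℝ) → (Fin n → ℝ) × (Fin n → ℝ))
    (hR : IsDiscretizationMap n U R)
    (hUsym : ∀ p : (Fin n → ℝ) × (Fin n → ℝ), p ∈ U ↔ (p.1, -p.2) ∈ U)
    (hsym : ∀ p ∈ U, R p = adjointMap R p)
    (φ φinv : (Fin n → ℝ) → (Fin n → ℝ))
    (hφ : ContDiff ℝ 1 φ) (hφinv : ContDiff ℝ 1 φinv)
    (hli : Function.LeftInverse φinv φ)
    (hri : Function.RightInverse φinv φ) :
    ∀ p ∈ Tlift φ '' U,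
      (φ ((R (Tlift φinv p)).1), φ ((R (Tlift φinv p)).2))
        = adjointMap
            (fun q : (Fin n → ℝ) × (Fin n → ℝ) =>
              (φ ((R (Tlift φinv q)).1), φ ((R (Tlift φinv q)).2))) p := by
  rintro p ⟨q, hqU, rfl⟩
  -- Tlift φinv (Tlift φ q) = q
  have hinv : Tlift φinv (Tlift φ q) = q := by
    have h1 : φinv (φ q.1) = q.1 := hli q.1
    have hcomp : fderiv ℝ (φinv ∘ φ) q.1 =
        (fderiv ℝ φinv (φ q.1)).comp (fderiv ℝ φ q.1) :=
      fderiv_comp q.1 (hφinv.differentiable one_ne_zero (φ q.1))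
        (hφ.differentiable one_ne_zero q.1)
    have hid : fderiv ℝ (φinv ∘ φ) q.1 = ContinuousLinearMap.id ℝ (Fin n → ℝ) := by
      have : (φinv ∘ φ) = id := funext hli
      rw [this, fderiv_id]
    have h2 : fderiv ℝ φinv (φ q.1) (fderiv ℝ φ q.1 q.2) = q.2 := by
      have := congrArg (fun (L : (Fin n → ℝ) →L[ℝ] (Fin n → ℝ)) => L q.2)
        (hcomp.symm.trans hid)
      simpa using this
    simp [Tlift, h1, h2]
  have hneg : Tlift φinv ((Tlift φ q).1, -(Tlift φ q).2)
      = (q.1, -q.2) := by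
    have : Tlift φinv ((Tlift φ q).1, -(Tlift φ q).2)
        = ((Tlift φinv (Tlift φ q)).1, -(Tlift φinv (Tlift φ q)).2) := by
      simp [Tlift]
    rw [this, hinv]
  have hs := hsym q hqU
  simp only [adjointMap, hneg, hinv]
  rw [hs]
  simp [adjointMap]
end
end

section
/- Let R : U → ℝⁿ × ℝⁿ be a discretization map on ℝⁿ, let φ : ℝⁿ → ℝⁿ be a C¹ diffeomorphism with tangent lift Tφ(x, v) := (φ(x), Dφ(x)·v), and define the lifted discretization map R_{φ⁻¹} := (φ⁻¹ × φ⁻¹) ∘ R ∘ Tφ on (Tφ)⁻¹(U). Let X : ℝⁿ × ℝᵐ → ℝⁿ be a control vector field and define its pushforward X_φ(y, u) := Dφ(φ⁻¹(y)) · X(φ⁻¹(y), u). Then for all x, x' ∈ ℝⁿ, u ∈ ℝᵐ and h ∈ ℝ, the following are equivalent: (a) there exists (z, v) ∈ (Tφ)⁻¹(U) with R_{φ⁻¹}(z, v) = (x, x') and v = h·X(z, u); (b) there exists (w, s) ∈ U with R(w, s) = (φ(x), φ(x')) and s = h·X_φ(w, u). Moreover, in this case one may take (w, s) = Tφ(z,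 v). -/
open Topology

noncomputable section

/-- the implicit discretization scheme of the control vector field `X` by
the lifted map `R_{φ⁻¹} = (φ⁻¹ × φ⁻¹) ∘ R ∘ Tφ` on `(Tφ)⁻¹(U)` relates `(x, x')` iff the
scheme of the pushforward field `X_φ(y,u) = Dφ(φ⁻¹ y)·X(φ⁻¹ y, u)` by `R` on `U` relates
`(φ x, φ x')`; moreover one may take the witness `(w, s) = Tφ(z, v)`. -/
theorem lifted_scheme_iff_pushforward_scheme
    {n m : ℕ} (U : Set ((Fin n → ℝ) × (Fin n → ℝ)))
    (R : (Fin n → ℝ) × (Fin n → ℝ) → (Fin n → ℝ) × (Fin n → ℝ))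
    (hR : IsDiscretizationMap n U R)
    (φ φinv : (Fin n → ℝ) → (Fin n → ℝ))
    (hφ : ContDiff ℝ 1 φ) (hφinv : ContDiff ℝ 1 φinv)
    (hli : Function.LeftInverse φinv φ)
    (hri : Function.RightInverse φinv φ)
    (X : (Fin n → ℝ) → (Fin m → ℝ) → (Fin n → ℝ)) :
    ∀ (x x' : Fin n → ℝ) (u : Fin m → ℝ) (h : ℝ),
      ((∃ z v : Fin n → ℝ, Tlift φ (z, v) ∈ U ∧
          (φinv ((R (Tlift φ (z, v))).1), φinv ((R (Tlift φ (z, v))).2)) = (x, x') ∧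
          v = h • X z u)
        ↔
        (∃ w s : Fin n → ℝ, (w, s) ∈ U ∧ R (w, s) = (φ x, φ x') ∧
          s = h • fderiv ℝ φ (φinv w) (X (φinv w) u)))
      ∧
      (∀ z v : Fin n → ℝ, Tlift φ (z, v) ∈ U →
        (φinv ((R (Tlift φ (z, v))).1), φinv ((R (Tlift φ (z, v))).2)) = (x, x') →
        v = h • X z u →
        R (Tlift φ (z, v)) = (φ x, φ x') ∧
        (Tlift φ (z, v)).2
          = h • fderiv ℝ φ (φinv ((Tlift φ (z, v)).1)) (X (φinv ((Tlift φ (z, v)).1)) u)) := by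
  intro x x' u h
  constructor
  · constructor
    · rintro ⟨z, v, hU, hxx, hv⟩
      refine ⟨φ z, fderiv ℝ φ z v, hU, ?_, ?_⟩
      · have h1 : φinv ((R (Tlift φ (z, v))).1) = x := congrArg Prod.fst hxx
        have h2 : φinv ((R (Tlift φ (z, v))).2) = x' := congrArg Prod.snd hxx
        have e1 : (R (Tlift φ (z, v))).1 = φ x := by rw [← h1, hri]
        have e2 : (R (Tlift φ (z, v))).2 = φ x' := by rw [← h2, hri]
        simpa [Tlift, Prod.ext_iff] using And.intro e1 e2
      · rw [hli z, hv, map_smul]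
    · rintro ⟨w, s, hU, hR', hs⟩
      refine ⟨φinv w, h • X (φinv w) u, ?_, ?_, rfl⟩
      · have : Tlift φ (φinv w, h • X (φinv w) u) = (w, s) := by
          simp [Tlift, hri w, hs, map_smul]
        rwa [this]
      · have hT : Tlift φ (φinv w, h • X (φinv w) u) = (w, s) := by
          simp [Tlift, hri w, hs, map_smul]
        rw [hT, hR']
        exact Prod.ext (hli x) (hli x')
  · intro z v hU hxx hv
    have h1 : φinv ((R (Tlift φ (z, v))).1) = x := congrArg Prod.fst hxx
    have h2 : φinv ((R (Tlift φ (z, v))).2) = x' := congrArg Prod.snd hxx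
    refine ⟨?_, ?_⟩
    · have e1 : (R (Tlift φ (z, v))).1 = φ x := by rw [← h1, hri]
      have e2 : (R (Tlift φ (z, v))).2 = φ x' := by rw [← h2, hri]
      exact Prod.ext e1 e2
    · show (Tlift φ (z, v)).2 = _
      simp only [Tlift, hli z]
      rw [hv, map_smul]
end
end

section
/- (Feedback linearizable discretization.) Let φ : ℝⁿ → ℝⁿ be a C¹ diffeomorphism, ψ : ℝⁿ × ℝᵐ → ℝᵐ a map, X : ℝⁿ × ℝᵐ → ℝⁿ a control vector field, and A ∈ ℝⁿˣⁿ, B ∈ ℝⁿˣᵐ matrices such that Dφ(x)·X(x, u) = A·φ(x) + B·ψ(x, u) for all x ∈ ℝⁿ, u ∈ ℝᵐ (feedback linearization of the continuous system). Let R : U → ℝⁿ × ℝⁿ be a discretization map on ℝⁿ, h ∈ ℝ, and A_h ∈ ℝⁿˣⁿ, B_h ∈ ℝⁿˣᵐ matrices such that R preserves linearity: for all (w, s) ∈ U, y, y' ∈ ℝⁿ and v ∈ ℝᵐ, if R(w, s) = (y, y') and s = h·(A·w + B·v), then y' = A_h·y + B_h·v. Then the discretization of the nonlinear system by the lifted map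 R_{φ⁻¹} := (φ⁻¹ × φ⁻¹) ∘ R ∘ Tφ is feedback linearizable: for all x_k, x_{k+1} ∈ ℝⁿ, u_k ∈ ℝᵐ and (z, v₀) ∈ (Tφ)⁻¹(U), if R_{φ⁻¹}(z, v₀) = (x_k, x_{k+1}) and v₀ = h·X(z, u_k), then φ(x_{k+1}) = A_h·φ(x_k) + B_h·ψ(z, u_k). -/
open Topology

noncomputable section

/-- Feedback linearizable discretization: if the continuous control system
`ẋ = X(x,u)` is feedback linearized by `(φ, ψ, A, B)`, i.e. `Dφ(x)·X(x,u) = A·φ(x) + B·ψ(x,u)`,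
and `R` is a discretization map preserving linearity at stepsize `h` (with matrices `A_h, B_h`),
then the discretization of the nonlinear system by the lifted map
`R_{φ⁻¹} = (φ⁻¹ × φ⁻¹) ∘ R ∘ Tφ` is feedback linearizable:
`φ(x_{k+1}) = A_h·φ(x_k) + B_h·ψ(z, u_k)`. -/
theorem lifted_discretization_is_feedback_linearizable
    {n m : ℕ} (U : Set ((Fin n → ℝ) × (Fin n → ℝ)))
    (R : (Fin n → ℝ) × (Fin n → ℝ) → (Fin n → ℝ) × (Fin n → ℝ))
    (hR : IsDiscretizationMap n U R)
    (φ φinv : (Fin n → ℝ) → (Fin n → ℝ))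
    (hφ : ContDiff ℝ 1 φ) (hφinv : ContDiff ℝ 1 φinv)
    (hli : Function.LeftInverse φinv φ)
    (hri : Function.RightInverse φinv φ)
    (ψ : (Fin n → ℝ) → (Fin m → ℝ) → (Fin m → ℝ))
    (X : (Fin n → ℝ) → (Fin m → ℝ) → (Fin n → ℝ))
    (A : Matrix (Fin n) (Fin n) ℝ) (B : Matrix (Fin n) (Fin m) ℝ)
    (hfblin : ∀ (x : Fin n → ℝ) (u : Fin m → ℝ),
      fderiv ℝ φ x (X x u) = A.mulVec (φ x) + B.mulVec (ψ x u))
    (h : ℝ)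
    (Ah : Matrix (Fin n) (Fin n) ℝ) (Bh : Matrix (Fin n) (Fin m) ℝ)
    (hpres : ∀ (w s y y' : Fin n → ℝ) (v : Fin m → ℝ),
      (w, s) ∈ U → R (w, s) = (y, y') → s = h • (A.mulVec w + B.mulVec v) →
      y' = Ah.mulVec y + Bh.mulVec v) :
    ∀ (xk xk1 : Fin n → ℝ) (uk : Fin m → ℝ) (z v₀ : Fin n → ℝ),
      Tlift φ (z, v₀) ∈ U →
      (φinv ((R (Tlift φ (z, v₀))).1), φinv ((R (Tlift φ (z, v₀))).2)) = (xk, xk1) →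
      v₀ = h • X z uk →
      φ xk1 = Ah.mulVec (φ xk) + Bh.mulVec (ψ z uk) := by
  intro xk xk1 uk z v₀ hU hRfi hv₀
  obtain ⟨h1, h2⟩ := Prod.mk.injEq _ _ _ _ ▸ hRfi
  have hs : (Tlift φ (z, v₀)).2 = h • (A.mulVec (φ z) + B.mulVec (ψ z uk)) := by
    simp only [Tlift, hv₀, map_smul, hfblin]
  have key := hpres (φ z) ((Tlift φ (z, v₀)).2) (R (Tlift φ (z, v₀))).1
    (R (Tlift φ (z, v₀))).2 (ψ z uk) hU rfl hs
  have e1 : φ xk = (R (Tlift φ (z, v₀))).1 := by rw [← h1]; exact hri _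
  have e2 : φ xk1 = (R (Tlift φ (z, v₀))).2 := by rw [← h2]; exact hri _
  rw [e1, e2, key]
end
end

section
/- (Feedback linearizability of the adjoint discretization.) Let φ : ℝⁿ → ℝⁿ be a C¹ diffeomorphism, ψ : ℝⁿ × ℝᵐ → ℝᵐ, X : ℝⁿ × ℝᵐ → ℝⁿ, and A ∈ ℝⁿˣⁿ, B ∈ ℝⁿˣᵐ matrices such that Dφ(x)·X(x, u) = A·φ(x) + B·ψ(x, u) for all x, u. Let R : U → ℝⁿ × ℝⁿ be a discretization map on ℝⁿ, h ∈ ℝ, and suppose R preserves linearity at stepsize −h: there exist matrices A_{−h} ∈ ℝⁿˣⁿ and B_{−h} ∈ ℝⁿˣᵐ such that for all (w, s) ∈ U, y, y' ∈ ℝⁿ and v ∈ ℝᵐ, if R(w, s) = (y, y') and s = −h·(A·w + B·v), then y' = A_{−h}·y + B_{−h}·v. Let R* be the adjoint of R and R*_{φ⁻¹} := (φ⁻¹ × φ⁻¹) ∘ R* ∘ Tφ. Then for all x_k, x_{k+1} ∈ ℝⁿ, u_k ∈ ℝᵐ and (z, v₀) with Tφ(z, v₀) ∈ U*, if R*_{φ⁻¹}(z,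 v₀) = (x_k, x_{k+1}) and v₀ = h·X(z, u_k), then φ(x_k) = A_{−h}·φ(x_{k+1}) + B_{−h}·ψ(z, u_k). -/
open Topology

noncomputable section

/-- Feedback linearizability of the adjoint discretization: if the
continuous system is feedback linearized by `(φ, ψ, A, B)` and `R` preserves linearity
at stepsize `−h` (with matrices `A₋ₕ, B₋ₕ`), then the discretization by
`R*_{φ⁻¹} = (φ⁻¹ × φ⁻¹) ∘ R* ∘ Tφ` satisfies
`φ(x_k) = A₋ₕ·φ(x_{k+1}) + B₋ₕ·ψ(z, u_k)`. -/
theorem adjoint_lifted_discretization_is_feedback_linearizable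
    {n m : ℕ} (U : Set ((Fin n → ℝ) × (Fin n → ℝ)))
    (R : (Fin n → ℝ) × (Fin n → ℝ) → (Fin n → ℝ) × (Fin n → ℝ))
    (hR : IsDiscretizationMap n U R)
    (φ φinv : (Fin n → ℝ) → (Fin n → ℝ))
    (hφ : ContDiff ℝ 1 φ) (hφinv : ContDiff ℝ 1 φinv)
    (hli : Function.LeftInverse φinv φ)
    (hri : Function.RightInverse φinv φ)
    (ψ : (Fin n → ℝ) → (Fin m → ℝ) → (Fin m → ℝ))
    (X : (Fin n → ℝ) → (Fin m → ℝ) → (Fin n → ℝ))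
    (A : Matrix (Fin n) (Fin n) ℝ) (B : Matrix (Fin n) (Fin m) ℝ)
    (hfblin : ∀ (x : Fin n → ℝ) (u : Fin m → ℝ),
      fderiv ℝ φ x (X x u) = A.mulVec (φ x) + B.mulVec (ψ x u))
    (h : ℝ)
    (Amh : Matrix (Fin n) (Fin n) ℝ) (Bmh : Matrix (Fin n) (Fin m) ℝ)
    (hpres : ∀ (w s y y' : Fin n → ℝ) (v : Fin m → ℝ),
      (w, s) ∈ U → R (w, s) = (y, y') → s = (-h) • (A.mulVec w + B.mulVec v) →
      y' = Amh.mulVec y + Bmh.mulVec v) :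
    ∀ (xk xk1 : Fin n → ℝ) (uk : Fin m → ℝ) (z v₀ : Fin n → ℝ),
      Tlift φ (z, v₀) ∈ {p : (Fin n → ℝ) × (Fin n → ℝ) | (p.1, -p.2) ∈ U} →
      (φinv ((adjointMap R (Tlift φ (z, v₀))).1),
        φinv ((adjointMap R (Tlift φ (z, v₀))).2)) = (xk, xk1) →
      v₀ = h • X z uk →
      φ xk = Amh.mulVec (φ xk1) + Bmh.mulVec (ψ z uk) := by
  intro xk xk1 uk z v₀ hmem heq hv
  simp only [Tlift, adjointMap, Prod.mk.injEq] at heq hmem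
  obtain ⟨h1, h2⟩ := heq
  have hs : -(fderiv ℝ φ z v₀) = (-h) • (A.mulVec (φ z) + B.mulVec (ψ z uk)) := by
    rw [hv, (fderiv ℝ φ z).map_smul, hfblin, neg_smul]
  have key := hpres (φ z) (-(fderiv ℝ φ z v₀))
    (R (φ z, -(fderiv ℝ φ z v₀))).1 (R (φ z, -(fderiv ℝ φ z v₀))).2
    (ψ z uk) hmem rfl hs
  rw [← h1, ← h2, hri, hri]
  exact key
end
end

section
/- (Symmetry of the composed scheme.) Let R = (R¹, R²) : U → ℝⁿ × ℝⁿ be a discretization map on ℝⁿ with adjoint R*(x, v) := (R²(x, −v), R¹(x, −v)) on U* = {(x, v) : (x, −v) ∈ U}, and let X : ℝⁿ → ℝⁿ be a vector field. Fix h ∈ ℝ and x, m, y ∈ ℝⁿ, and suppose there exist (z₁, v₁) ∈ U and (z₂, v₂) ∈ U* with R(z₁, v₁) = (x, m), v₁ = (h/2)·X(z₁), R*(z₂, v₂) = (m, y), v₂ = (h/2)·X(z₂). Then the same data, read backwards with stepsize −h, satisfies the composed scheme from y to x through the same intermediate point m: (z₂, −v₂) ∈ U with R(z₂, −v₂) =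 (y, m) and −v₂ = (−h/2)·X(z₂), and (z₁, −v₁) ∈ U* with R*(z₁, −v₁) = (m, x) and −v₁ = (−h/2)·X(z₁). In other words, the composed discretization given by R⁻¹(x_k, x_{k+1/2}) = (h/2)X(τ(R⁻¹(x_k, x_{k+1/2}))) followed by (R*)⁻¹(x_{k+1/2}, x_{k+1}) = (h/2)X(τ((R*)⁻¹(x_{k+1/2}, x_{k+1}))) is symmetric. -/
open Topology

noncomputable section

/-- Symmetry of the composed scheme: if the half-step scheme by `R` leads
from `x` to the intermediate point `m` and the half-step scheme by `R*` leads from `m`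
to `y` (both with stepsize `h/2`), then the same data read backwards with stepsize `−h`
satisfies the composed scheme from `y` to `x` through the same intermediate point `m`;
i.e. the composed discretization is symmetric. -/
theorem composed_scheme_is_symmetric
    {n : ℕ} (U : Set ((Fin n → ℝ) × (Fin n → ℝ)))
    (R : (Fin n → ℝ) × (Fin n → ℝ) → (Fin n → ℝ) × (Fin n → ℝ))
    (hR : IsDiscretizationMap n U R)
    (X : (Fin n → ℝ) → (Fin n → ℝ))
    (h : ℝ) (x m y : Fin n → ℝ)
    (z₁ v₁ z₂ v₂ : Fin n → ℝ)
    (h₁U : (z₁, v₁) ∈ U)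
    (h₁R : R (z₁, v₁) = (x, m))
    (h₁v : v₁ = (h / 2) • X z₁)
    (h₂U : (z₂, v₂) ∈ {p : (Fin n → ℝ) × (Fin n → ℝ) | (p.1, -p.2) ∈ U})
    (h₂R : adjointMap R (z₂, v₂) = (m, y))
    (h₂v : v₂ = (h / 2) • X z₂) :
    ((z₂, -v₂) ∈ U ∧ R (z₂, -v₂) = (y, m) ∧ -v₂ = (-h / 2) • X z₂) ∧
    ((z₁, -v₁) ∈ {p : (Fin n → ℝ) × (Fin n → ℝ) | (p.1, -p.2) ∈ U} ∧
      adjointMap R (z₁, -v₁) = (m, x) ∧ -v₁ = (-h / 2) • X z₁) := by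
  simp only [adjointMap] at h₂R ⊢
  constructor
  · refine ⟨h₂U, ?_, ?_⟩
    · have h1 : (R (z₂, -v₂)).2 = m := congrArg Prod.fst h₂R
      have h2 : (R (z₂, -v₂)).1 = y := congrArg Prod.snd h₂R
      exact Prod.ext h2 h1
    · rw [h₂v, ← neg_smul, neg_div]
  · refine ⟨by simpa using h₁U, ?_, ?_⟩
    · simp only [neg_neg, h₁R]
    · rw [h₁v, ← neg_smul, neg_div]
end
end

section
/- (Feedback linearizability of the explicit Euler discretization of the example system.) Fix a ∈ ℝ, a ≠ 0, and h ∈ ℝ. Let φ(x₁, x₂) = (x₁, a·sin x₂) and ψ((x₁, x₂), u) = (−x₁² + u)·a·cos x₂, and define the discrete-time map F((x₁, x₂), u; h) = (x₁ + h·a·sin x₂, arcsin(sin x₂ + h·(−x₁² + u)·cos x₂)). Then for every (x₁, x₂) ∈ ℝ², u ∈ ℝ such that sin x₂ + h·(−x₁² + u)·cos x₂ ∈ [−1, 1], one has φ(F((x₁, x₂), u; h)) = A_h·φ(x₁, x₂) + B_h·ψ((x₁, x₂), u), where A_h is the 2×2 matrix with rows (1, h) and (0, 1) and B_h is the column vector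 (0, h)ᵀ. That is, the sampled system y_k = φ(x_k), v_k = ψ(x_k, u_k) satisfies the linear recursion y_{1,k+1} = y_{1,k} + h·y_{2,k}, y_{2,k+1} = y_{2,k} + h·v_k. -/
open Topology

noncomputable section

/-- Feedback linearizability of the explicit Euler discretization of the
example system: for `a ≠ 0` and stepsize `h`, with
`F((x₁,x₂),u;h) = (x₁ + h·a·sin x₂, arcsin(sin x₂ + h·(−x₁² + u)·cos x₂))`,
`φ(x₁,x₂) = (x₁, a sin x₂)` and `ψ((x₁,x₂),u) = (−x₁² + u)·a·cos x₂`, whenever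
`sin x₂ + h·(−x₁² + u)·cos x₂ ∈ [−1,1]` one has
`φ(F(x,u;h)) = A_h·φ(x) + B_h·ψ(x,u)` with `A_h = [[1,h],[0,1]]`, `B_h = [0,h]ᵀ`,
i.e. `y_{1,k+1} = y_{1,k} + h·y_{2,k}` and `y_{2,k+1} = y_{2,k} + h·v_k`. -/
theorem example_system_explicitEuler_feedback_linearizable (a : ℝ) (ha : a ≠ 0) (h : ℝ) :
    ∀ (x : Fin 2 → ℝ) (u : ℝ),
      Real.sin (x 1) + h * (-(x 0) ^ 2 + u) * Real.cos (x 1) ∈ Set.Icc (-1 : ℝ) 1 →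
      (fun y : Fin 2 → ℝ => ![y 0, a * Real.sin (y 1)])
          ![x 0 + h * a * Real.sin (x 1),
            Real.arcsin (Real.sin (x 1) + h * (-(x 0) ^ 2 + u) * Real.cos (x 1))]
        = (!![1, h; 0, 1] : Matrix (Fin 2) (Fin 2) ℝ).mulVec ![x 0, a * Real.sin (x 1)]
          + (!![0; h] : Matrix (Fin 2) (Fin 1) ℝ).mulVec
              ![(-(x 0) ^ 2 + u) * (a * Real.cos (x 1))] := by
  intro x u hmem
  funext i
  fin_cases i <;>
    simp [Matrix.mulVec, dotProduct, Fin.sum_univ_succ,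
      Real.sin_arcsin hmem.1 hmem.2] <;> ring
end
end
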